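/- arXiv:1108.3958 — 15 statements merged into one kernel-verified Lean document; each statement's English description precedes it below -/
import Mathlib

section
/- Let n ≥ 1 and let f : Fin n → Fin n. The submonoid of Function.End (Fin n) generated by f is synchronizing if and only if f has a unique periodic point, i.e., there is exactly one x : Fin n such that f^[k] x = x for some k ≥ 1. -/
open SimpleGraph

/-- A transformation monoid is *synchronizing* if it contains an element of rank 1,
i.e. whose range has exactly one element. -/
def IsSynchronizing {n : ℕ} (M : Submonoid (Function.End (Fin n))) : Prop :=
  ∃ f ∈ M, ∃ c : Fin n, Set.range f = {c}

/-- The graph `Gr(M)` of a transformation monoid `M`: distinct vertices `v, w` are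
adjacent iff no element of `M` identifies them. -/
def Gr {n : ℕ} (M : Submonoid (Function.End (Fin n))) : SimpleGraph (Fin n) where
  Adj v w := v ≠ w ∧ ∀ f ∈ M, f v ≠ f w
  symm := ⟨fun v w ⟨h1, h2⟩ => ⟨h1.symm, fun f hf => (h2 f hf).symm⟩⟩
  loopless := ⟨fun v ⟨h1, _⟩ => h1 rfl⟩

/-- The monoid of endomorphisms of a graph `X`, as a submonoid of `Function.End`. -/
def GraphEnd {n : ℕ} (X : SimpleGraph (Fin n)) : Submonoid (Function.End (Fin n)) where
  carrier := {f | ∀ ⦃v w⦄, X.Adj v w → X.Adj (f v) (f w)}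
  one_mem' := by intro v w h; exact h
  mul_mem' := by intro f g hf hg v w h; exact hf (hg h)

/-- The hull of a graph: `Hull(X) = Gr(End(X))`. -/
def Hull {n : ℕ} (X : SimpleGraph (Fin n)) : SimpleGraph (Fin n) := Gr (GraphEnd X)

/-- The derived graph `X'` of `X`: keep only the edges lying in a clique of
maximum size `ω(X)`. -/
def derivedGraph {n : ℕ} (X : SimpleGraph (Fin n)) : SimpleGraph (Fin n) where
  Adj v w := X.Adj v w ∧ ∃ s : Finset (Fin n), X.IsNClique X.cliqueNum s ∧ v ∈ s ∧ w ∈ s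
  symm := ⟨fun v w ⟨h, s, hs, hv, hw⟩ => ⟨h.symm, s, hs, hw, hv⟩⟩
  loopless := ⟨fun v ⟨h, _⟩ => h.ne rfl⟩

theorem single_generator_synchronizing_iff_unique_periodic_point
    (n : ℕ) (hn : 1 ≤ n) (f : Function.End (Fin n)) :
    IsSynchronizing (Submonoid.closure {f}) ↔
      ∃! x : Fin n, ∃ k ≥ 1, f^[k] x = x := by
  have pow_eq : ∀ k : ℕ, ((f ^ k : Function.End (Fin n)) : Fin n → Fin n) = f^[k] := by
    intro k
    induction k with
    | zero => rfl
    | succ k ih =>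
      erw [pow_succ, Function.iterate_succ]
      exact congrArg (· ∘ f) ih
  constructor
  · rintro ⟨g, hg, c, hc⟩
    rw [Submonoid.mem_closure_singleton] at hg
    obtain ⟨k, rfl⟩ := hg
    have hall : ∀ y, f^[k] y = c := by
      intro y
      have : f^[k] y ∈ Set.range ((f ^ k : Function.End (Fin n)) : Fin n → Fin n) := by
        rw [pow_eq]; exact Set.mem_range_self y
      rw [hc] at this
      exact this
    rcases Nat.eq_zero_or_pos k with hk0 | hkpos
    · -- k = 0: all points equal c, n = 1 essentially
      subst hk0
      have hac : ∀ y : Fin n, y = c := fun y => hall y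
      refine ⟨c, ⟨1, le_refl 1, ?_⟩, fun y _ => hac y⟩
      show f c = c; exact (hac (f c)).trans (hac c).symm
    · -- k ≥ 1
      have hfc : f c = c := by
        have h1 : f^[k] (f c) = c := hall (f c)
        have h2 : f^[k] (f c) = f (f^[k] c) := by
          erw [← Function.iterate_succ_apply, Function.iterate_succ_apply']
        rw [h2, hall c] at h1
        exact h1
      refine ⟨c, ⟨k, hkpos, hall c⟩, ?_⟩
      rintro y ⟨m, hm, hy⟩
      have h1 : f^[k * m] y = y := by
        erw [Nat.mul_comm, Function.iterate_mul]
        exact Function.iterate_fixed hy k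
      have h2 : f^[k * m] y = c := by
        erw [Function.iterate_mul]
        obtain ⟨m', rfl⟩ := Nat.exists_eq_add_of_le hm
        erw [Nat.add_comm, Function.iterate_add_apply]
        erw [Function.iterate_one, hall y]
        exact Function.iterate_fixed (hall c) m'
      rw [h1] at h2
      exact h2
  · rintro ⟨x, ⟨k, hk, hx⟩, huniq⟩
    have hfx : f x = x := by
      apply huniq
      refine ⟨k, hk, ?_⟩
      erw [← Function.iterate_succ_apply, Function.iterate_succ_apply', hx]
    have hall : ∀ y, f^[n] y = x := by
      intro y
      obtain ⟨i, j, hij, hval⟩ :=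
        Fintype.exists_ne_map_eq_of_card_lt (fun i : Fin (n + 1) => f^[(i : ℕ)] y)
          (by simp)
      wlog hlt : (i : ℕ) < (j : ℕ) generalizing i j
      · exact this j i hij.symm hval.symm
          (lt_of_le_of_ne (Nat.le_of_not_lt hlt) (fun h => hij (Fin.ext h.symm)))
      have hper : f^[(j : ℕ) - (i : ℕ)] (f^[(i : ℕ)] y) = f^[(i : ℕ)] y := by
        erw [← Function.iterate_add_apply, Nat.sub_add_cancel hlt.le]
        exact hval.symm
      have hix : f^[(i : ℕ)] y = x :=
        huniq _ ⟨(j : ℕ) - (i : ℕ), Nat.le_sub_of_add_le (by omega), hper⟩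
      have hile : (i : ℕ) ≤ n := Nat.lt_succ_iff.mp i.isLt
      calc f^[n] y = f^[n - (i : ℕ)] (f^[(i : ℕ)] y) := by
            erw [← Function.iterate_add_apply, Nat.sub_add_cancel hile]
          _ = x := by rw [hix]; exact Function.iterate_fixed hfx _
    refine ⟨f ^ n, Submonoid.mem_closure_singleton.2 ⟨n, rfl⟩, x, ?_⟩
    rw [pow_eq]
    apply Set.eq_singleton_iff_unique_mem.2
    exact ⟨⟨x, hall x⟩, fun z ⟨y, hy⟩ => hy ▸ hall y⟩
end

section
/- Let n ≥ 1. The number of functions f : Fin n → Fin n such that the submonoid of Function.End (Fin n) generated by f is synchronizing equals n^(n-1). Equivalently, the probability that a uniformly random endofunction of an n-element set generates a synchronizing monoid is 1/n. -/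
open SimpleGraph

set_option linter.unusedSectionVars false
namespace SyncCount

open Function Finset
open scoped Classical

variable {α : Type*} [Fintype α] [DecidableEq α]

lemma exists_iterate_mem_periodicPts (f : α → α) (x : α) :
    ∃ m, f^[m] x ∈ periodicPts f := by
  obtain ⟨i, j, hne, heq⟩ := Finite.exists_ne_map_eq_of_infinite (fun k : ℕ => f^[k] x)
  rcases hne.lt_or_gt with h | h
  · exact ⟨i, Function.mk_mem_periodicPts (Nat.sub_pos_of_lt h)
      (by unfold Function.IsPeriodicPt IsFixedPt
          rw [← Function.iterate_add_apply, Nat.sub_add_cancel h.le, heq])⟩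
  · exact ⟨j, Function.mk_mem_periodicPts (Nat.sub_pos_of_lt h)
      (by unfold Function.IsPeriodicPt IsFixedPt
          rw [← Function.iterate_add_apply, Nat.sub_add_cancel h.le, heq])⟩

noncomputable def steps (f : α → α) (x : α) : ℕ := Nat.find (exists_iterate_mem_periodicPts f x)

lemma steps_spec (f : α → α) (x : α) : f^[steps f x] x ∈ periodicPts f :=
  Nat.find_spec (exists_iterate_mem_periodicPts f x)

lemma steps_min {f : α → α} {x : α} {j : ℕ} (hj : j < steps f x) :
    f^[j] x ∉ periodicPts f :=
  Nat.find_min (exists_iterate_mem_periodicPts f x) hj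

lemma steps_le {f : α → α} {x : α} {m : ℕ} (hm : f^[m] x ∈ periodicPts f) :
    steps f x ≤ m :=
  Nat.find_min' (exists_iterate_mem_periodicPts f x) hm

lemma iterate_mem_of_mapsTo {f : α → α} {C : Finset α} (h : ∀ c ∈ C, f c ∈ C)
    {x : α} (hx : x ∈ C) (k : ℕ) : f^[k] x ∈ C := by
  induction k with
  | zero => simpa
  | succ k ih => rw [Function.iterate_succ_apply']; exact h _ ih

lemma iterate_eq_of_agree {f g : α → α} {C : Finset α} (hfg : ∀ y, y ∉ C → f y = g y)
    {x : α} : ∀ k, (∀ j, j < k → g^[j] x ∉ C) → f^[k] x = g^[k] x := by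
  intro k
  induction k with
  | zero => intro; rfl
  | succ k ih =>
      intro h
      rw [Function.iterate_succ_apply', Function.iterate_succ_apply',
        ih (fun j hj => h j (hj.trans (Nat.lt_succ_self k))),
        hfg _ (h k (Nat.lt_succ_self k))]

lemma periodicPts_subset {f g : α → α} {C : Finset α}
    (hmaps : ∀ c ∈ C, f c ∈ C) (hagree : ∀ y, y ∉ C → f y = g y)
    (hsub : ∀ x ∈ periodicPts g, x ∈ C) : ∀ x ∈ periodicPts f, x ∈ C := by
  intro x hx
  obtain ⟨p, hp, hper⟩ := Function.mem_periodicPts.mp hx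
  by_cases hC : ∃ j, f^[j] x ∈ C
  · obtain ⟨j, hj⟩ := hC
    have h1 : f^[j * p] x = x := (hper.const_mul j).eq
    have h2 : f^[j * p] x ∈ C := by
      have : j * p = (j * p - j) + j := by
        have : j ≤ j * p := Nat.le_mul_of_pos_right j hp
        omega
      rw [this, Function.iterate_add_apply]
      exact iterate_mem_of_mapsTo hmaps hj _
    rwa [h1] at h2
  · push_neg at hC
    apply hsub
    have key : ∀ k, g^[k] x = f^[k] x :=
      fun k => iterate_eq_of_agree (fun y hy => (hagree y hy).symm) k (fun j _ => hC j)
    exact Function.mk_mem_periodicPts hp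
      (by unfold Function.IsPeriodicPt IsFixedPt; rw [key p]; exact hper.eq)

def Sync (f : α → α) : Prop := ∃ c : α, periodicPts f = {c}

lemma apply_root_eq {f : α → α} {c : α} (h : periodicPts f = {c}) : f c = c := by
  have hc : c ∈ periodicPts f := by rw [h]; rfl
  have := (Function.bijOn_periodicPts f).mapsTo hc
  rw [h] at this
  exact this

noncomputable def cyc (f : α → α) : Finset α := Finset.univ.filter (· ∈ periodicPts f)

@[simp] lemma mem_cyc {f : α → α} {x : α} : x ∈ cyc f ↔ x ∈ periodicPts f := by
  simp [cyc]


section Split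
variable (C : Finset α)

def Forest : Type _ :=
  {h : α → α // (∀ c ∈ C, h c = c) ∧ ∀ x ∈ periodicPts h, x ∈ C}

noncomputable def pressDown (f : α → α) : α → α := fun x => if x ∈ C then x else f x

variable {C}

lemma pressDown_forest {f : α → α} (hf : ∀ x ∈ periodicPts f, x ∈ C) :
    (∀ c ∈ C, pressDown C f c = c) ∧ ∀ x ∈ periodicPts (pressDown C f), x ∈ C := by
  constructor
  · intro c hc; simp [pressDown, hc]
  · apply periodicPts_subset (g := f)
    · intro c hc; simp [pressDown, hc]
    · intro y hy; simp [pressDown, hy]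
    · exact hf

noncomputable def glue (h : α → α) (σ : Equiv.Perm {x // x ∈ C}) : α → α :=
  fun x => if hx : x ∈ C then (σ ⟨x, hx⟩ : α) else h x

lemma glue_mem {h : α → α} {σ : Equiv.Perm {x // x ∈ C}} {x : α} (hx : x ∈ C) :
    glue h σ x ∈ C := by
  simp only [glue, dif_pos hx]; exact (σ ⟨x, hx⟩).2

lemma glue_iterate {h : α → α} {σ : Equiv.Perm {x // x ∈ C}} :
    ∀ (k : ℕ) (c : α) (hc : c ∈ C), (glue h σ)^[k] c = ((σ ^ k) ⟨c, hc⟩ : α) := by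
  intro k
  induction k with
  | zero => intro c hc; simp
  | succ k ih =>
      intro c hc
      rw [Function.iterate_succ_apply', ih c hc]
      have hmem : ((σ ^ k) ⟨c, hc⟩ : α) ∈ C := ((σ ^ k) ⟨c, hc⟩).2
      simp only [glue, dif_pos hmem]
      rw [pow_succ' σ k]
      simp [Subtype.coe_eta]

lemma cyc_glue {h : α → α} (hh : (∀ c ∈ C, h c = c) ∧ ∀ x ∈ periodicPts h, x ∈ C)
    (σ : Equiv.Perm {x // x ∈ C}) : cyc (glue h σ) = C := by
  ext x
  rw [mem_cyc]
  constructor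
  · intro hx
    refine periodicPts_subset (g := h) (fun c hc => glue_mem hc) ?_ hh.2 x hx
    intro y hy; simp [glue, hy]
  · intro hx
    have hpos : 0 < orderOf σ := orderOf_pos σ
    apply Function.mk_mem_periodicPts hpos
    unfold Function.IsPeriodicPt IsFixedPt
    rw [glue_iterate (orderOf σ) x hx, pow_orderOf_eq_one σ]
    rfl

noncomputable def splitEquiv (C : Finset α) :
    {f : α → α // cyc f = C} ≃ Forest C × Equiv.Perm {x // x ∈ C} where
  toFun p :=
    (⟨pressDown C p.1, pressDown_forest (fun x hx => by rw [← p.2, mem_cyc]; exact hx)⟩,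
     Equiv.ofBijective
       (fun x => (⟨p.1 x.1, by
          have hx : (x : α) ∈ periodicPts p.1 := by rw [← mem_cyc, p.2]; exact x.2
          have h2 : p.1 x.1 ∈ cyc p.1 :=
            mem_cyc.mpr ((Function.bijOn_periodicPts p.1).mapsTo hx)
          rwa [p.2] at h2⟩ :
            {x // x ∈ C}))
       (Finite.injective_iff_bijective.mp (fun x y hxy => by
          apply Subtype.ext
          exact (Function.bijOn_periodicPts p.1).injOn
            (by rw [← mem_cyc, p.2]; exact x.2) (by rw [← mem_cyc, p.2]; exact y.2)
            (congrArg Subtype.val hxy))))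
  invFun q := ⟨glue q.1.1 q.2, cyc_glue q.1.2 q.2⟩
  left_inv p := by
    apply Subtype.ext
    funext x
    by_cases hx : x ∈ C
    · simp [glue, dif_pos hx]
    · simp [glue, dif_neg hx, pressDown, if_neg hx]
  right_inv q := by
    refine Prod.ext (Subtype.ext (funext fun x => ?_)) (Equiv.ext fun x => ?_)
    · by_cases hx : x ∈ C
      · simp only [pressDown, if_pos hx]
        exact (q.1.2.1 x hx).symm
      · simp only [pressDown, if_neg hx, glue, dif_neg hx]
    · apply Subtype.ext
      simp only [Equiv.ofBijective_apply, glue, dif_pos x.2, Subtype.coe_eta]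

lemma card_fiber1 (C : Finset α) :
    Nat.card {f : α → α // cyc f = C} = Nat.card (Forest C) * (C.card).factorial := by
  rw [Nat.card_congr (splitEquiv C), Nat.card_prod]
  congr 1
  rw [Nat.card_eq_fintype_card, Fintype.card_perm, Fintype.card_coe]

end Split

section Path

noncomputable def pathSet (g : α → α) (v : α) : Finset α :=
  (Finset.range (steps g v + 1)).image (fun i => g^[i] v)

lemma path_inj {g : α → α} {v : α} {i j : ℕ} (hi : i ≤ steps g v) (hj : j ≤ steps g v)
    (hij : g^[i] v = g^[j] v) : i = j := by
  rcases lt_trichotomy i j with h | h | h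
  · exact absurd (Function.mk_mem_periodicPts (n := j - i) (by omega)
      (by unfold Function.IsPeriodicPt IsFixedPt
          rw [← Function.iterate_add_apply, Nat.sub_add_cancel h.le]
          exact hij.symm)) (steps_min (lt_of_lt_of_le h hj))
  · exact h
  · exact absurd (Function.mk_mem_periodicPts (n := i - j) (by omega)
      (by unfold Function.IsPeriodicPt IsFixedPt
          rw [← Function.iterate_add_apply, Nat.sub_add_cancel h.le]
          exact hij)) (steps_min (lt_of_lt_of_le h hi))

lemma card_pathSet (g : α → α) (v : α) : (pathSet g v).card = steps g v + 1 := by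
  rw [pathSet, Finset.card_image_of_injOn, Finset.card_range]
  intro i hi j hj hij
  rw [Finset.mem_coe, Finset.mem_range] at hi hj
  exact path_inj (by omega) (by omega) hij

lemma mem_pathSet_iff {g : α → α} {v x : α} :
    x ∈ pathSet g v ↔ ∃ i ≤ steps g v, g^[i] v = x := by
  simp [pathSet, Finset.mem_image, Finset.mem_range, Nat.lt_succ_iff]

lemma self_mem_pathSet (g : α → α) (v : α) : v ∈ pathSet g v :=
  mem_pathSet_iff.mpr ⟨0, Nat.zero_le _, rfl⟩

def nxt {k : ℕ} (i : Fin k) : Fin k := ⟨min (i.1 + 1) (k - 1), by omega⟩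

variable {C : Finset α}

noncomputable def chain (h : α → α) (e : Fin C.card ≃ {x // x ∈ C}) : α → α :=
  fun x => if hx : x ∈ C then (e (nxt (e.symm ⟨x, hx⟩)) : α) else h x

lemma chain_mem {h : α → α} {e : Fin C.card ≃ {x // x ∈ C}} {x : α} (hx : x ∈ C) :
    chain h e x ∈ C := by
  simp only [chain, dif_pos hx]; exact (e _).2

lemma chain_agree {h : α → α} {e : Fin C.card ≃ {x // x ∈ C}} {x : α} (hx : x ∉ C) :
    chain h e x = h x := by
  simp only [chain, dif_neg hx]

lemma chain_iterate {h : α → α} {e : Fin C.card ≃ {x // x ∈ C}} :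
    ∀ (m : ℕ) (i : Fin C.card),
      (chain h e)^[m] (e i : α) = (e ⟨min (i.1 + m) (C.card - 1), by omega⟩ : α) := by
  intro m
  induction m with
  | zero =>
      intro i
      have hi := i.isLt
      simp only [Function.iterate_zero, id_eq]
      congr 1
      apply congrArg e
      apply Fin.ext
      simp only [Fin.val_mk]
      omega
  | succ m ih =>
      intro i
      rw [Function.iterate_succ_apply', ih i]
      have hmem : ((e ⟨min (i.1 + m) (C.card - 1), by omega⟩ : {x // x ∈ C}) : α) ∈ C :=
        (e _).2
      simp only [chain, dif_pos hmem, Subtype.coe_eta, Equiv.symm_apply_apply]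
      congr 1
      exact congrArg e (Fin.ext (by simp [nxt]; omega))

end Path

section Chain2
variable {C : Finset α} {h : α → α} (e : Fin C.card ≃ {x // x ∈ C})

lemma steps_mem_pathSet (g : α → α) (v : α) : g^[steps g v] v ∈ pathSet g v :=
  mem_pathSet_iff.mpr ⟨steps g v, le_refl _, rfl⟩

lemma chain_periodicPts (hh : (∀ c ∈ C, h c = c) ∧ ∀ x ∈ periodicPts h, x ∈ C)
    (hk : 0 < C.card) :
    periodicPts (chain h e) = {(e ⟨C.card - 1, by omega⟩ : α)} := by
  apply Set.eq_of_subset_of_subset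
  · intro x hx
    have hxC : x ∈ C := periodicPts_subset (fun c hc => chain_mem hc)
        (fun y hy => chain_agree hy) hh.2 x hx
    obtain ⟨p, hp, hper⟩ := Function.mem_periodicPts.mp hx
    set i := e.symm ⟨x, hxC⟩ with hi
    have hxe : x = (e i : α) := by rw [hi]; simp
    have h1 : (chain h e)^[p * C.card] x = x := (hper.mul_const C.card).eq
    rw [hxe, chain_iterate (p * C.card) i] at h1
    rw [Set.mem_singleton_iff, hxe, ← h1]
    have hmul : C.card ≤ p * C.card := Nat.le_mul_of_pos_left _ hp
    congr 2
    apply Fin.ext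
    simp only [Fin.val_mk]
    omega
  · intro x hx
    rw [Set.mem_singleton_iff] at hx
    subst hx
    apply Function.mk_mem_periodicPts one_pos
    unfold Function.IsPeriodicPt IsFixedPt
    show (chain h e)^[1] _ = _
    rw [chain_iterate 1 ⟨C.card - 1, by omega⟩]
    congr 2
    apply Fin.ext
    simp only [Fin.val_mk]
    omega

lemma steps_chain (hh : (∀ c ∈ C, h c = c) ∧ ∀ x ∈ periodicPts h, x ∈ C)
    (hk : 0 < C.card) :
    steps (chain h e) (e ⟨0, hk⟩ : α) = C.card - 1 := by
  have hroot := chain_periodicPts e hh hk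
  apply le_antisymm
  · apply steps_le
    rw [chain_iterate (C.card - 1) ⟨0, hk⟩, hroot, Set.mem_singleton_iff]
    congr 2
    apply Fin.ext
    simp only [Fin.val_mk]
    omega
  · have h1 := steps_spec (chain h e) (e ⟨0, hk⟩ : α)
    rw [hroot, Set.mem_singleton_iff, chain_iterate _ ⟨0, hk⟩] at h1
    have h2 := e.injective (Subtype.coe_injective h1)
    have h3 := congrArg Fin.val h2
    simp only [Fin.val_mk] at h3
    omega

lemma pathSet_chain (hh : (∀ c ∈ C, h c = c) ∧ ∀ x ∈ periodicPts h, x ∈ C)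
    (hk : 0 < C.card) :
    pathSet (chain h e) (e ⟨0, hk⟩ : α) = C := by
  ext x
  rw [mem_pathSet_iff, steps_chain e hh hk]
  constructor
  · rintro ⟨i, hi, rfl⟩
    rw [chain_iterate i ⟨0, hk⟩]
    exact (e _).2
  · intro hx
    refine ⟨(e.symm ⟨x, hx⟩).1, by have := (e.symm ⟨x, hx⟩).isLt; omega, ?_⟩
    rw [chain_iterate _ ⟨0, hk⟩]
    have hlt := (e.symm ⟨x, hx⟩).isLt
    have heq : (⟨min (0 + (e.symm ⟨x, hx⟩).1) (C.card - 1), by omega⟩ : Fin C.card)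
        = e.symm ⟨x, hx⟩ := by
      apply Fin.ext
      simp only [Fin.val_mk]
      omega
    rw [heq]
    simp

lemma helper_card {g : α → α} {v : α} {C : Finset α} (hp : pathSet g v = C) :
    C.card = steps g v + 1 := by
  subst hp; exact card_pathSet g v

lemma helper_sub {g : α → α} {v : α} {C : Finset α} (hg : Sync g)
    (hp : pathSet g v = C) : ∀ x ∈ periodicPts g, x ∈ C := by
  intro x hx
  obtain ⟨c, hc⟩ := hg
  rw [hc, Set.mem_singleton_iff] at hx
  subst hx
  subst hp
  have h1 := steps_spec g v
  rw [hc, Set.mem_singleton_iff] at h1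
  rw [← h1]
  exact steps_mem_pathSet g v

lemma helper_mem {g : α → α} {v : α} {C : Finset α} (hp : pathSet g v = C)
    {i : ℕ} (hi : i < C.card) : g^[i] v ∈ C := by
  subst hp
  rw [card_pathSet] at hi
  exact mem_pathSet_iff.mpr ⟨i, by omega, rfl⟩

lemma helper_inj {g : α → α} {v : α} {C : Finset α} (hp : pathSet g v = C)
    {i j : Fin C.card} (hij : g^[i.1] v = g^[j.1] v) : i = j := by
  subst hp
  have hc := card_pathSet g v
  have hi := i.isLt
  have hj := j.isLt
  exact Fin.ext (path_inj (by omega) (by omega) hij)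

lemma chain_eq_of {C : Finset α} {g : α → α} {v : α} (hg : Sync g) (hp : pathSet g v = C)
    {h : α → α} (hagree : ∀ y, y ∉ C → h y = g y)
    (E : Fin C.card ≃ {x // x ∈ C}) (hE : ∀ i, (E i : α) = g^[i.1] v) :
    chain h E = g := by
  obtain ⟨c, hc⟩ := hg
  have hcard : C.card = steps g v + 1 := helper_card hp
  have hroot : g^[steps g v] v = c := by
    have := steps_spec g v
    rwa [hc, Set.mem_singleton_iff] at this
  have hfix : g c = c := apply_root_eq hc
  funext x
  by_cases hx : x ∈ C
  · simp only [chain, dif_pos hx]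
    have key : ∀ m : ℕ, m < C.card → g^[m] v = x →
        g^[min (m + 1) (C.card - 1)] v = g x := by
      intro m hm hmx
      rcases Nat.lt_or_ge (m + 1) C.card with hcase | hcase
      · have hmin : min (m + 1) (C.card - 1) = m + 1 := by omega
        rw [hmin, Function.iterate_succ_apply', hmx]
      · have h1 : min (m + 1) (C.card - 1) = steps g v := by omega
        have h2 : m = steps g v := by omega
        rw [h1, hroot, ← hmx, h2, hroot, hfix]
    have hlt := (E.symm ⟨x, hx⟩).isLt
    have hgx : g^[(E.symm ⟨x, hx⟩).1] v = x := by
      rw [← hE (E.symm ⟨x, hx⟩), E.apply_symm_apply]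
    rw [hE (nxt (E.symm ⟨x, hx⟩))]
    exact key (E.symm ⟨x, hx⟩).1 hlt hgx
  · rw [chain_agree hx]
    exact hagree x hx

noncomputable def fiber2Equiv (C : Finset α) (hk : 0 < C.card) :
    {p : {g : α → α // Sync g} × α // pathSet p.1.1 p.2 = C}
      ≃ Forest C × (Fin C.card ≃ {x // x ∈ C}) where
  toFun p :=
    (⟨pressDown C p.1.1.1, pressDown_forest (helper_sub p.1.1.2 p.2)⟩,
     Equiv.ofBijective
       (fun i => (⟨p.1.1.1^[i.1] p.1.2, helper_mem p.2 i.isLt⟩ : {x // x ∈ C}))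
       (by
         apply (Fintype.bijective_iff_injective_and_card _).mpr
         refine ⟨fun i j hij => helper_inj p.2 (congrArg Subtype.val hij), ?_⟩
         simp [Fintype.card_coe]))
  invFun q :=
    ⟨⟨⟨chain q.1.1 q.2, ⟨_, chain_periodicPts q.2 q.1.2 hk⟩⟩, (q.2 ⟨0, hk⟩ : α)⟩,
      pathSet_chain q.2 q.1.2 hk⟩
  left_inv p := by
    obtain ⟨⟨⟨g, hg⟩, v⟩, hp⟩ := p
    apply Subtype.ext
    apply Prod.ext
    · apply Subtype.ext
      exact chain_eq_of hg hp
        (fun y hy => by simp only [pressDown, if_neg hy]) _ (fun i => rfl)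
    · show (g^[(0 : ℕ)] v) = v
      simp
  right_inv q := by
    obtain ⟨⟨h, hh⟩, e⟩ := q
    apply Prod.ext
    · apply Subtype.ext
      funext x
      by_cases hx : x ∈ C
      · show (if x ∈ C then x else _) = h x
        rw [if_pos hx]
        exact (hh.1 x hx).symm
      · show (if x ∈ C then x else chain h e x) = h x
        rw [if_neg hx]
        exact chain_agree hx
    · apply Equiv.ext
      intro i
      apply Subtype.ext
      show (chain h e)^[i.1] ((e ⟨0, hk⟩ : {x // x ∈ C}) : α) = (e i : α)
      rw [chain_iterate i.1 ⟨0, hk⟩]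
      congr 2
      apply Fin.ext
      have := i.isLt
      simp only [Fin.val_mk]
      omega

lemma card_fiber2 (hα : Nonempty α) (C : Finset α) :
    Nat.card {p : {g : α → α // Sync g} × α // pathSet p.1.1 p.2 = C}
      = Nat.card (Forest C) * (C.card).factorial := by
  rcases Nat.eq_zero_or_pos C.card with hk | hk
  · have hC : C = ∅ := Finset.card_eq_zero.mp hk
    subst hC
    have h1 : IsEmpty {p : {g : α → α // Sync g} × α // pathSet p.1.1 p.2 = ∅} := by
      constructor
      rintro ⟨p, hp⟩
      have := self_mem_pathSet p.1.1 p.2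
      rw [hp] at this
      exact absurd this (Finset.notMem_empty _)
    have h2 : IsEmpty (Forest (∅ : Finset α)) := by
      constructor
      rintro ⟨f, hf⟩
      obtain ⟨x⟩ := hα
      obtain ⟨m, hm⟩ := exists_iterate_mem_periodicPts f x
      exact absurd (hf.2 _ hm) (Finset.notMem_empty _)
    rw [Nat.card_of_isEmpty, Nat.card_of_isEmpty, zero_mul]
  · rw [Nat.card_congr (fiber2Equiv C hk), Nat.card_prod]
    congr 1
    rw [Nat.card_eq_fintype_card,
      Fintype.card_equiv ((Fintype.equivFinOfCardEq (Fintype.card_coe C)).symm),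
      Fintype.card_fin]

end Chain2

lemma card_sync_mul (hα : Nonempty α) :
    Nat.card {g : α → α // Sync g} * Fintype.card α
      = Fintype.card α ^ Fintype.card α := by
  have h1 : Nat.card (α → α) = ∑ C : Finset α, Nat.card {f : α → α // cyc f = C} := by
    rw [Nat.card_congr (Equiv.sigmaFiberEquiv (fun f : α → α => cyc f)).symm,
      Nat.card_eq_fintype_card, Fintype.card_sigma]
    exact Finset.sum_congr rfl fun C _ => (Nat.card_eq_fintype_card).symm
  have h2 : Nat.card ({g : α → α // Sync g} × α)
      = ∑ C : Finset α,
          Nat.card {p : {g : α → α // Sync g} × α // pathSet p.1.1 p.2 = C} := by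
    rw [Nat.card_congr (Equiv.sigmaFiberEquiv
        (fun p : {g : α → α // Sync g} × α => pathSet p.1.1 p.2)).symm,
      Nat.card_eq_fintype_card, Fintype.card_sigma]
    exact Finset.sum_congr rfl fun C _ => (Nat.card_eq_fintype_card).symm
  have h3 : Nat.card (α → α) = Nat.card ({g : α → α // Sync g} × α) := by
    rw [h1, h2]
    exact Finset.sum_congr rfl fun C _ => by rw [card_fiber1, card_fiber2 hα]
  have h4 : Nat.card (α → α) = Fintype.card α ^ Fintype.card α := by
    rw [Nat.card_fun, Nat.card_eq_fintype_card]
  rw [← h4, h3, Nat.card_prod, Nat.card_eq_fintype_card (α := α)]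

lemma end_pow_apply {β : Type*} (f : Function.End β) (k : ℕ) (x : β) :
    (f ^ k) x = f^[k] x := by
  induction k generalizing x with
  | zero => rfl
  | succ k ih =>
      rw [pow_succ]
      exact ih (f x)

end SyncCount

lemma isSync_iff {n : ℕ} (f : Function.End (Fin n)) :
    IsSynchronizing (Submonoid.closure {f}) ↔ SyncCount.Sync f := by
  constructor
  · rintro ⟨g, hg, c, hrange⟩
    obtain ⟨k, rfl⟩ := Submonoid.mem_closure_singleton.mp hg
    have hpt : ∀ x, f^[k] x = c := by
      intro x
      have hmem : (f ^ k) x ∈ Set.range (f ^ k) := Set.mem_range_self x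
      rw [hrange, Set.mem_singleton_iff] at hmem
      rw [← SyncCount.end_pow_apply]
      exact hmem
    rcases Nat.eq_zero_or_pos k with hk | hk
    · subst hk
      have hall : ∀ x : Fin n, x = c := fun x => hpt x
      refine ⟨c, Set.eq_of_subset_of_subset (fun x _ => hall x) ?_⟩
      intro x _
      exact Function.mk_mem_periodicPts one_pos
        (show f^[1] x = x from ((hall (f^[1] x)).trans (hall x).symm))
    · refine ⟨c, ?_⟩
      have hfix : f c = c := by
        conv_lhs => rw [← hpt c]
        rw [← Function.iterate_succ_apply' f k c, Function.iterate_succ_apply f k c]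
        exact hpt (f c)
      apply Set.eq_of_subset_of_subset
      · intro x hx
        obtain ⟨p, hp, hper⟩ := Function.mem_periodicPts.mp hx
        have h1 : f^[k * p] x = x := (hper.const_mul k).eq
        have h2 : f^[k * p] x = c := by
          have hkp : k * p = (k * p - k) + k := by
            have : k ≤ k * p := Nat.le_mul_of_pos_right k hp
            omega
          rw [hkp, Function.iterate_add_apply (f := f), hpt x, Function.iterate_fixed hfix]
        rw [Set.mem_singleton_iff, ← h1, h2]
      · intro x hx
        rw [Set.mem_singleton_iff] at hx
        subst hx
        exact Function.mk_mem_periodicPts hk (hpt x)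
  · rintro ⟨c, hc⟩
    classical
    refine ⟨f ^ (Finset.univ.sup fun x : Fin n => SyncCount.steps f x),
      Submonoid.mem_closure_singleton.mpr ⟨_, rfl⟩, c, ?_⟩
    set K := Finset.univ.sup fun x : Fin n => SyncCount.steps f x with hK
    have hfix : f c = c := SyncCount.apply_root_eq hc
    have hall : ∀ x : Fin n, f^[K] x = c := by
      intro x
      have hs : SyncCount.steps f x ≤ K := Finset.le_sup (Finset.mem_univ x)
      have h1 : f^[SyncCount.steps f x] x = c := by
        have := SyncCount.steps_spec f x
        rwa [hc, Set.mem_singleton_iff] at this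
      have h2 : f^[K] x = f^[K - SyncCount.steps f x] (f^[SyncCount.steps f x] x) := by
        rw [← Function.iterate_add_apply (f := f)]
        congr 1
        omega
      rw [h2, h1, Function.iterate_fixed hfix]
    apply Set.eq_of_subset_of_subset
    · rintro y ⟨x, rfl⟩
      rw [Set.mem_singleton_iff, SyncCount.end_pow_apply]
      exact hall x
    · intro y hy
      rw [Set.mem_singleton_iff] at hy
      exact ⟨c, by rw [SyncCount.end_pow_apply]; exact (hall c).trans hy.symm⟩

theorem card_synchronizing_single_generators (n : ℕ) (hn : 1 ≤ n) :
    Nat.card {f : Function.End (Fin n) // IsSynchronizing (Submonoid.closure {f})}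
        = n ^ (n - 1) ∧
    (Nat.card {f : Function.End (Fin n) // IsSynchronizing (Submonoid.closure {f})} : ℚ)
        / (n ^ n : ℚ) = 1 / n := by
  have hne : Nonempty (Fin n) := ⟨⟨0, hn⟩⟩
  have hcongr : Nat.card {f : Function.End (Fin n) // IsSynchronizing (Submonoid.closure {f})}
      = Nat.card {g : Fin n → Fin n // SyncCount.Sync g} :=
    Nat.card_congr (Equiv.subtypeEquivRight fun f => isSync_iff f)
  have hmul := SyncCount.card_sync_mul (α := Fin n) hne
  rw [Fintype.card_fin] at hmul
  have hpow : n ^ n = n ^ (n - 1) * n := by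
    calc n ^ n = n ^ (n - 1 + 1) := by rw [Nat.sub_add_cancel hn]
    _ = n ^ (n - 1) * n := pow_succ n (n - 1)
  have hcard : Nat.card {g : Fin n → Fin n // SyncCount.Sync g} = n ^ (n - 1) := by
    apply Nat.eq_of_mul_eq_mul_right (show 0 < n by omega)
    rw [hmul, hpow]
  have hn0 : (n : ℚ) ≠ 0 := Nat.cast_ne_zero.mpr (by omega)
  constructor
  · rw [hcongr, hcard]
  · rw [hcongr, hcard]
    push_cast
    rw [div_eq_div_iff (pow_ne_zero n hn0) hn0, one_mul, ← pow_succ,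
      Nat.sub_add_cancel hn]
end

section
/- Let n ≥ 1. The number of functions f : Fin n → Fin n having a unique periodic point (exactly one x : Fin n with f^[k] x = x for some k ≥ 1) equals n^(n-1). -/
open SimpleGraph

section JoyalAux

open Function

variable {n : ℕ}
open Function

variable {n : ℕ}

lemma aux_exists_iter_mem_periodicPts (f : Fin n → Fin n) (x : Fin n) :
    ∃ m, f^[m] x ∈ periodicPts f := by
  obtain ⟨i, j, hne, hij⟩ := Finite.exists_ne_map_eq_of_infinite (fun k : ℕ => f^[k] x)
  rcases hne.lt_or_gt with h | h
  · exact ⟨i, Function.mk_mem_periodicPts (Nat.sub_pos_of_lt h)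
      (by simp only [IsPeriodicPt, IsFixedPt, ← Function.iterate_add_apply,
        Nat.sub_add_cancel h.le]; exact hij.symm)⟩
  · exact ⟨j, Function.mk_mem_periodicPts (Nat.sub_pos_of_lt h)
      (by simp only [IsPeriodicPt, IsFixedPt, ← Function.iterate_add_apply,
        Nat.sub_add_cancel h.le]; exact hij)⟩

lemma aux_injOn_periodicPts (f : Fin n → Fin n) :
    Set.InjOn f (periodicPts f) := by
  intro x hx y hy hxy
  obtain ⟨a, ha, hax⟩ := Function.mem_periodicPts.mp hx
  obtain ⟨b, hb, hby⟩ := Function.mem_periodicPts.mp hy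
  have hx' : f^[a*b] x = x := hax.mul_const b
  have hy' : f^[a*b] y = y := by
    have := hby.mul_const a; rwa [Nat.mul_comm] at this
  have hab : 1 ≤ a * b := Nat.one_le_iff_ne_zero.mpr (Nat.mul_ne_zero ha.ne' hb.ne')
  calc x = f^[a*b] x := hx'.symm
    _ = f^[a*b - 1] (f x) := by rw [← Function.iterate_succ_apply]; congr 1; omega
    _ = f^[a*b - 1] (f y) := by rw [hxy]
    _ = f^[a*b] y := by rw [← Function.iterate_succ_apply]; congr 1; omega
    _ = y := hy'

lemma aux_apply_mem_periodicPts {f : Fin n → Fin n} {x : Fin n} (hx : x ∈ periodicPts f) :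
    f x ∈ periodicPts f := by
  obtain ⟨a, ha, hax⟩ := Function.mem_periodicPts.mp hx
  exact Function.mk_mem_periodicPts ha hax.apply

lemma aux_iterate_mem_periodicPts {f : Fin n → Fin n} {x : Fin n} (hx : x ∈ periodicPts f)
    (m : ℕ) : f^[m] x ∈ periodicPts f := by
  obtain ⟨a, ha, hax⟩ := Function.mem_periodicPts.mp hx
  exact Function.mk_mem_periodicPts ha (hax.apply_iterate m)

noncomputable def pfin (f : Fin n → Fin n) : Finset (Fin n) :=
  (Set.toFinite (periodicPts f)).toFinset

lemma mem_pfin {f : Fin n → Fin n} {x : Fin n} : x ∈ pfin f ↔ x ∈ periodicPts f :=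
  Set.Finite.mem_toFinset _

noncomputable def eIso (f : Fin n → Fin n) : Fin (pfin f).card ≃o {y // y ∈ pfin f} :=
  (pfin f).orderIsoOfFin rfl

noncomputable def cfun (f : Fin n → Fin n) : Fin (pfin f).card → Fin n :=
  fun i => f ((eIso f i : {y // y ∈ pfin f}) : Fin n)

lemma cfun_mem (f : Fin n → Fin n) (i : Fin (pfin f).card) : cfun f i ∈ pfin f := by
  rw [mem_pfin]
  exact aux_apply_mem_periodicPts (mem_pfin.mp (eIso f i).2)

lemma cfun_inj (f : Fin n → Fin n) : Function.Injective (cfun f) := by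
  intro i j hij
  have := aux_injOn_periodicPts f (mem_pfin.mp (eIso f i).2) (mem_pfin.mp (eIso f j).2) hij
  have : (eIso f) i = (eIso f) j := Subtype.ext this
  exact (eIso f).injective this

noncomputable def cEquiv (f : Fin n → Fin n) :
    Fin (pfin f).card ≃ {y // y ∈ pfin f} :=
  Equiv.ofBijective (fun i => ⟨cfun f i, cfun_mem f i⟩)
    ((Fintype.bijective_iff_injective_and_card _).mpr
      ⟨fun i j h => cfun_inj f (congrArg Subtype.val h), by simp⟩)

lemma cEquiv_symm_cfun (f : Fin n → Fin n) (i : Fin (pfin f).card) :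
    (cEquiv f).symm ⟨cfun f i, cfun_mem f i⟩ = i := by
  have : (cEquiv f) i = ⟨cfun f i, cfun_mem f i⟩ := rfl
  rw [← this, Equiv.symm_apply_apply]

/-- surjectivity of `cfun` onto `pfin f` -/
lemma cfun_surj {f : Fin n → Fin n} {y : Fin n} (hy : y ∈ pfin f) :
    ∃ i, cfun f i = y := by
  refine ⟨(cEquiv f).symm ⟨y, hy⟩, ?_⟩
  have := (cEquiv f).apply_symm_apply ⟨y, hy⟩
  exact congrArg Subtype.val this

noncomputable def phiFun (f : Fin n → Fin n) : Fin n → Fin n := fun y =>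
  if hy : y ∈ pfin f then
    (if h : ((cEquiv f).symm ⟨y, hy⟩ : ℕ) + 1 < (pfin f).card then
      cfun f ⟨((cEquiv f).symm ⟨y, hy⟩ : ℕ) + 1, h⟩ else y)
  else f y

lemma phiFun_not_mem {f : Fin n → Fin n} {y : Fin n} (hy : y ∉ pfin f) :
    phiFun f y = f y := dif_neg hy

lemma phiFun_c {f : Fin n → Fin n} (i : Fin (pfin f).card)
    (h : (i : ℕ) + 1 < (pfin f).card) :
    phiFun f (cfun f i) = cfun f ⟨(i : ℕ) + 1, h⟩ := by
  rw [phiFun, dif_pos (cfun_mem f i)]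
  simp only [cEquiv_symm_cfun]
  rw [dif_pos h]

lemma phiFun_c_last {f : Fin n → Fin n} (i : Fin (pfin f).card)
    (h : ¬ ((i : ℕ) + 1 < (pfin f).card)) :
    phiFun f (cfun f i) = cfun f i := by
  rw [phiFun, dif_pos (cfun_mem f i)]
  simp only [cEquiv_symm_cfun]
  rw [dif_neg h]

lemma phi_iter {f : Fin n → Fin n} (i : Fin (pfin f).card) (t : ℕ)
    (h : (i : ℕ) + t ≤ (pfin f).card - 1) :
    (phiFun f)^[t] (cfun f i) = cfun f ⟨(i : ℕ) + t, by have := i.2; omega⟩ := by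
  induction t with
  | zero => simp
  | succ t ih =>
    have ht : (i : ℕ) + t ≤ (pfin f).card - 1 := by omega
    rw [Function.iterate_succ_apply', ih ht]
    have hlt : ((i : ℕ) + t) + 1 < (pfin f).card := by have := i.2; omega
    rw [phiFun_c _ hlt]
    exact congrArg (cfun f) (Fin.ext (by simp [Nat.add_assoc]))

lemma phi_fix {f : Fin n → Fin n} (hk : 0 < (pfin f).card) :
    phiFun f (cfun f ⟨(pfin f).card - 1, by omega⟩) = cfun f ⟨(pfin f).card - 1, by omega⟩ :=
  phiFun_c_last _ (by simp; omega)

lemma phi_iter_fix {f : Fin n → Fin n} (hk : 0 < (pfin f).card) (s : ℕ) :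
    (phiFun f)^[s] (cfun f ⟨(pfin f).card - 1, by omega⟩)
      = cfun f ⟨(pfin f).card - 1, by omega⟩ := by
  induction s with
  | zero => rfl
  | succ s ih => rw [Function.iterate_succ_apply', ih, phi_fix hk]

lemma phi_reaches_aux {f : Fin n → Fin n} (hk : 0 < (pfin f).card) :
    ∀ (m : ℕ) (y : Fin n), f^[m] y ∈ pfin f →
      ∃ s, (phiFun f)^[s] y = cfun f ⟨(pfin f).card - 1, by omega⟩ := by
  intro m
  induction m with
  | zero =>
    intro y hy
    simp only [Function.iterate_zero_apply] at hy
    obtain ⟨i, hi⟩ := cfun_surj hy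
    refine ⟨(pfin f).card - 1 - i, ?_⟩
    rw [← hi, phi_iter i _ (by omega)]
    congr 1
    ext
    simp
    have := i.2; omega
  | succ m ih =>
    intro y hy
    by_cases hy' : y ∈ pfin f
    · obtain ⟨i, hi⟩ := cfun_surj hy'
      refine ⟨(pfin f).card - 1 - i, ?_⟩
      rw [← hi, phi_iter i _ (by omega)]
      congr 1
      ext
      simp
      have := i.2; omega
    · obtain ⟨s, hs⟩ := ih (f y) (by rwa [← Function.iterate_succ_apply])
      exact ⟨s + 1, by rw [Function.iterate_succ_apply, phiFun_not_mem hy', hs]⟩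

lemma phi_reaches {f : Fin n → Fin n} (hk : 0 < (pfin f).card) (y : Fin n) :
    ∃ s, (phiFun f)^[s] y = cfun f ⟨(pfin f).card - 1, by omega⟩ := by
  obtain ⟨m, hm⟩ := aux_exists_iter_mem_periodicPts f y
  exact phi_reaches_aux hk m y (mem_pfin.mpr hm)

lemma phi_periodic_eq {f : Fin n → Fin n} (hk : 0 < (pfin f).card) {y : Fin n}
    (hy : y ∈ periodicPts (phiFun f)) :
    y = cfun f ⟨(pfin f).card - 1, by omega⟩ := by
  obtain ⟨p, hp, hpy⟩ := Function.mem_periodicPts.mp hy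
  obtain ⟨s, hs⟩ := phi_reaches hk y
  have h1 : (phiFun f)^[p * (s + 1)] y = y := hpy.mul_const (s + 1)
  have h2 : (phiFun f)^[p * (s + 1)] y = cfun f ⟨(pfin f).card - 1, by omega⟩ := by
    have hps : s + 1 ≤ p * (s + 1) := Nat.le_mul_of_pos_left _ hp
    have : p * (s + 1) = (p * (s + 1) - s) + s := by omega
    rw [this, Function.iterate_add_apply, hs, phi_iter_fix hk]
  rw [← h1, h2]

lemma phi_unique {f : Fin n → Fin n} (hk : 0 < (pfin f).card) :
    ∃! x : Fin n, ∃ k ≥ 1, (phiFun f)^[k] x = x := by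
  refine ⟨cfun f ⟨(pfin f).card - 1, by omega⟩, ⟨1, le_refl 1, by simpa using phi_fix hk⟩, ?_⟩
  intro y ⟨p, hp, hpy⟩
  exact phi_periodic_eq hk (Function.mk_mem_periodicPts (by omega) hpy)

section Psi

variable (g : Fin n → Fin n) (hg : ∃! x : Fin n, ∃ k ≥ 1, g^[k] x = x)

noncomputable def rpt : Fin n := hg.choose

lemma rpt_mem : rpt g hg ∈ periodicPts g := by
  obtain ⟨k, hk, h⟩ := hg.choose_spec.1
  exact Function.mk_mem_periodicPts (by omega) h

lemma periodic_eq_rpt {y : Fin n} (hy : y ∈ periodicPts g) : y = rpt g hg := by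
  obtain ⟨k, hk, h⟩ := Function.mem_periodicPts.mp hy
  exact hg.choose_spec.2 y ⟨k, by omega, h⟩

lemma rpt_fixed : g (rpt g hg) = rpt g hg :=
  periodic_eq_rpt g hg (aux_apply_mem_periodicPts (rpt_mem g hg))

lemma rpt_iter_fixed (s : ℕ) : g^[s] (rpt g hg) = rpt g hg := by
  induction s with
  | zero => rfl
  | succ s ih => rw [Function.iterate_succ_apply', ih]; exact rpt_fixed g hg

variable (x : Fin n)

lemma exists_hit : ∃ m, g^[m] x = rpt g hg := by
  obtain ⟨m, hm⟩ := aux_exists_iter_mem_periodicPts g x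
  exact ⟨m, periodic_eq_rpt g hg hm⟩

noncomputable def hitTime : ℕ := Nat.find (exists_hit g hg x)

lemma hitTime_spec : g^[hitTime g hg x] x = rpt g hg := Nat.find_spec (exists_hit g hg x)

lemma hitTime_min {j : ℕ} (hj : j < hitTime g hg x) : g^[j] x ≠ rpt g hg :=
  Nat.find_min (exists_hit g hg x) hj

noncomputable def qfun : Fin (hitTime g hg x + 1) → Fin n := fun j => g^[(j : ℕ)] x

lemma qfun_inj : Function.Injective (qfun g hg x) := by
  intro i j hij
  by_contra hne
  have hne' : (i : ℕ) ≠ (j : ℕ) := fun h => hne (Fin.ext h)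
  -- wlog i < j
  rcases Nat.lt_or_ge (i : ℕ) (j : ℕ) with h | h
  · have hper : g^[(j : ℕ) - (i : ℕ)] (g^[(i : ℕ)] x) = g^[(i : ℕ)] x := by
      rw [← Function.iterate_add_apply]
      have : (j : ℕ) - (i : ℕ) + (i : ℕ) = (j : ℕ) := by omega
      rw [this]; exact hij.symm
    have : g^[(i : ℕ)] x = rpt g hg := periodic_eq_rpt g hg
      (Function.mk_mem_periodicPts (by omega) hper)
    exact hitTime_min g hg x (by have := j.2; omega) this
  · have hlt : (j : ℕ) < (i : ℕ) := by omega
    have hper : g^[(i : ℕ) - (j : ℕ)] (g^[(j : ℕ)] x) = g^[(j : ℕ)] x := by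
      rw [← Function.iterate_add_apply]
      have : (i : ℕ) - (j : ℕ) + (j : ℕ) = (i : ℕ) := by omega
      rw [this]; exact hij
    have : g^[(j : ℕ)] x = rpt g hg := periodic_eq_rpt g hg
      (Function.mk_mem_periodicPts (by omega) hper)
    exact hitTime_min g hg x (by have := i.2; omega) this

noncomputable def Qfin : Finset (Fin n) := Finset.image (qfun g hg x) Finset.univ

lemma Qfin_card : (Qfin g hg x).card = hitTime g hg x + 1 := by
  rw [Qfin, Finset.card_image_of_injective _ (qfun_inj g hg x)]
  simp

lemma qfun_mem (j) : qfun g hg x j ∈ Qfin g hg x := by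
  rw [Qfin]; exact Finset.mem_image_of_mem _ (Finset.mem_univ j)

lemma Qfin_surj {y : Fin n} (hy : y ∈ Qfin g hg x) : ∃ j, qfun g hg x j = y := by
  rw [Qfin, Finset.mem_image] at hy
  obtain ⟨j, _, hj⟩ := hy
  exact ⟨j, hj⟩

noncomputable def dIso : Fin (hitTime g hg x + 1) ≃o {y // y ∈ Qfin g hg x} :=
  (Qfin g hg x).orderIsoOfFin (Qfin_card g hg x)

noncomputable def psiFun : Fin n → Fin n := fun y =>
  if hy : y ∈ Qfin g hg x then qfun g hg x ((dIso g hg x).symm ⟨y, hy⟩) else g y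

lemma psiFun_not_mem {y : Fin n} (hy : y ∉ Qfin g hg x) : psiFun g hg x y = g y :=
  dif_neg hy

lemma psiFun_d (j) : psiFun g hg x ((dIso g hg x j : {y // y ∈ Qfin g hg x}) : Fin n)
    = qfun g hg x j := by
  rw [psiFun, dif_pos (dIso g hg x j).2]
  congr 1
  exact OrderIso.symm_apply_apply _ j

end Psi

section Psi2

variable (g : Fin n → Fin n) (hg : ∃! x : Fin n, ∃ k ≥ 1, g^[k] x = x) (x : Fin n)

lemma psiFun_maps_Q {y : Fin n} (hy : y ∈ Qfin g hg x) : psiFun g hg x y ∈ Qfin g hg x := by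
  rw [psiFun, dif_pos hy]
  exact qfun_mem g hg x _

lemma psiFun_injOn : Set.InjOn (psiFun g hg x) (Qfin g hg x : Set (Fin n)) := by
  intro y1 hy1 y2 hy2 h
  simp only [Finset.coe_sort_coe, Finset.mem_coe] at hy1 hy2
  rw [psiFun, dif_pos hy1, psiFun, dif_pos hy2] at h
  have h1 := qfun_inj g hg x h
  have h2 : (⟨y1, hy1⟩ : {y // y ∈ Qfin g hg x}) = ⟨y2, hy2⟩ :=
    (dIso g hg x).symm.injective h1
  exact congrArg Subtype.val h2

lemma psiFun_iter_mem {y : Fin n} (hy : y ∈ Qfin g hg x) (s : ℕ) :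
    (psiFun g hg x)^[s] y ∈ Qfin g hg x := by
  induction s with
  | zero => exact hy
  | succ s ih => rw [Function.iterate_succ_apply']; exact psiFun_maps_Q g hg x ih

lemma psiFun_strip : ∀ (i : ℕ) {j : ℕ} {y : Fin n}, y ∈ Qfin g hg x →
    (psiFun g hg x)^[i] y = (psiFun g hg x)^[i + j] y → y = (psiFun g hg x)^[j] y := by
  intro i
  induction i with
  | zero => intro j y _ h; simpa using h
  | succ i ih =>
    intro j y hy h
    rw [Function.iterate_succ_apply, show i + 1 + j = (i + j) + 1 by omega,
      Function.iterate_succ_apply] at h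
    have h2 := ih (psiFun_maps_Q g hg x hy) h
    rw [← Function.iterate_succ_apply] at h2
    rw [Function.iterate_succ_apply'] at h2
    exact psiFun_injOn g hg x (by simpa using hy)
      (by simpa using psiFun_iter_mem g hg x hy j) h2

lemma psiFun_periodic_of_mem {y : Fin n} (hy : y ∈ Qfin g hg x) :
    y ∈ periodicPts (psiFun g hg x) := by
  obtain ⟨a, b, hne, hab⟩ := Finite.exists_ne_map_eq_of_infinite
    (fun s : ℕ => (psiFun g hg x)^[s] y)
  have key : ∀ a b : ℕ, a < b → (psiFun g hg x)^[a] y = (psiFun g hg x)^[b] y →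
      y ∈ periodicPts (psiFun g hg x) := by
    intro a b h hab
    have : (psiFun g hg x)^[a] y = (psiFun g hg x)^[a + (b - a)] y := by
      rw [show a + (b - a) = b by omega]; exact hab
    have := psiFun_strip g hg x a hy this
    exact Function.mk_mem_periodicPts (by omega) this.symm
  rcases hne.lt_or_gt with h | h
  · exact key a b h hab
  · exact key b a h hab.symm

lemma rpt_mem_Qfin : rpt g hg ∈ Qfin g hg x := by
  have : qfun g hg x ⟨hitTime g hg x, by omega⟩ = rpt g hg := hitTime_spec g hg x
  rw [← this]; exact qfun_mem g hg x _

lemma psiFun_mem_of_periodic {y : Fin n} (hy : y ∈ periodicPts (psiFun g hg x)) :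
    y ∈ Qfin g hg x := by
  by_contra hyQ
  obtain ⟨p, hp, hpy⟩ := Function.mem_periodicPts.mp hy
  by_cases horb : ∃ j, (psiFun g hg x)^[j] y ∈ Qfin g hg x
  · obtain ⟨j, hj⟩ := horb
    have hmem : ∀ t, (psiFun g hg x)^[j + t] y ∈ Qfin g hg x := by
      intro t
      rw [Nat.add_comm, Function.iterate_add_apply]
      exact psiFun_iter_mem g hg x hj t
    have hple : j ≤ p * (j + 1) := by
      have := Nat.le_mul_of_pos_left (j + 1) hp; omega
    have : (psiFun g hg x)^[p * (j + 1)] y = y := hpy.mul_const (j + 1)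
    have := hmem (p * (j + 1) - j)
    rw [show j + (p * (j + 1) - j) = p * (j + 1) by omega] at this
    rw [hpy.mul_const (j + 1)] at this
    exact hyQ this
  · push_neg at horb
    have heq : ∀ j, (psiFun g hg x)^[j] y = g^[j] y := by
      intro j
      induction j with
      | zero => rfl
      | succ j ih =>
        rw [Function.iterate_succ_apply', Function.iterate_succ_apply', ih,
          ← ih, psiFun_not_mem g hg x (horb j), ih]
    have hgp : g^[p] y = y := by rw [← heq p]; exact hpy
    have : y ∈ periodicPts g := Function.mk_mem_periodicPts hp hgp
    have := periodic_eq_rpt g hg this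
    rw [this] at hyQ
    exact hyQ (rpt_mem_Qfin g hg x)

lemma pfin_psi : pfin (psiFun g hg x) = Qfin g hg x := by
  ext y
  rw [mem_pfin]
  exact ⟨psiFun_mem_of_periodic g hg x, psiFun_periodic_of_mem g hg x⟩

end Psi2

lemma orderIsoOfFin_cast {s t : Finset (Fin n)} (hst : s = t) {a b : ℕ}
    (hs : s.card = a) (ht : t.card = b) (j : Fin a) (j' : Fin b)
    (hj : (j : ℕ) = (j' : ℕ)) :
    ((s.orderIsoOfFin hs j : {y // y ∈ s}) : Fin n)
      = ((t.orderIsoOfFin ht j' : {y // y ∈ t}) : Fin n) := by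
  subst hst
  subst hs
  subst ht
  have : j = j' := Fin.ext hj
  subst this
  rfl

lemma cfun_image (f : Fin n → Fin n) :
    Finset.image (cfun f) Finset.univ = pfin f := by
  apply Finset.eq_of_subset_of_card_le
  · intro y hy
    rw [Finset.mem_image] at hy
    obtain ⟨i, _, hi⟩ := hy
    rw [← hi]; exact cfun_mem f i
  · rw [Finset.card_image_of_injective _ (cfun_inj f)]
    simp

lemma pfin_card_pos (hn : 1 ≤ n) (f : Fin n → Fin n) : 0 < (pfin f).card := by
  obtain ⟨m, hm⟩ := aux_exists_iter_mem_periodicPts f ⟨0, hn⟩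
  exact Finset.card_pos.mpr ⟨_, mem_pfin.mpr hm⟩

section RT1
-- Round trip Φ ∘ Ψ : starting from (g, hg, x)
variable (g : Fin n → Fin n) (hg : ∃! x : Fin n, ∃ k ≥ 1, g^[k] x = x) (x : Fin n)

lemma psi_card : (pfin (psiFun g hg x)).card = hitTime g hg x + 1 := by
  rw [pfin_psi, Qfin_card]

lemma cfun_psi (j : Fin (pfin (psiFun g hg x)).card) :
    cfun (psiFun g hg x) j = g^[(j : ℕ)] x := by
  have hj : (j : ℕ) < hitTime g hg x + 1 := by
    have := j.2; have h2 := psi_card g hg x; omega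
  have hval : ((eIso (psiFun g hg x) j : {y // y ∈ pfin (psiFun g hg x)}) : Fin n)
      = ((dIso g hg x ⟨(j : ℕ), hj⟩ : {y // y ∈ Qfin g hg x}) : Fin n) :=
    orderIsoOfFin_cast (pfin_psi g hg x) rfl (Qfin_card g hg x) j ⟨(j : ℕ), hj⟩ rfl
  rw [cfun, hval, psiFun_d]
  rfl

lemma phi_psi_eq : phiFun (psiFun g hg x) = g := by
  funext y
  by_cases hy : y ∈ pfin (psiFun g hg x)
  · obtain ⟨i, hi⟩ := cfun_surj hy
    have hival : cfun (psiFun g hg x) i = g^[(i : ℕ)] x := cfun_psi g hg x i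
    have hcard := psi_card g hg x
    by_cases hlt : (i : ℕ) + 1 < (pfin (psiFun g hg x)).card
    · rw [← hi, phiFun_c i hlt, cfun_psi, hival]
      have : ((⟨(i : ℕ) + 1, hlt⟩ : Fin _) : ℕ) = (i : ℕ) + 1 := rfl
      rw [this, Function.iterate_succ_apply']
    · -- i is the last index : y = rpt
      have him : (i : ℕ) = hitTime g hg x := by have := i.2; omega
      have hyr : y = rpt g hg := by
        rw [← hi, hival, him]; exact hitTime_spec g hg x
      rw [← hi, phiFun_c_last i hlt, hi, hyr]
      exact (rpt_fixed g hg).symm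
  · rw [phiFun_not_mem hy, psiFun_not_mem]
    rwa [pfin_psi] at hy

lemma phi_psi_x : cfun (psiFun g hg x) ⟨0, by rw [psi_card]; omega⟩ = x :=
  cfun_psi g hg x _

end RT1

section RT2
variable (f : Fin n → Fin n) (hk : 0 < (pfin f).card)

lemma rpt_phi : rpt (phiFun f) (phi_unique hk)
    = cfun f ⟨(pfin f).card - 1, by omega⟩ :=
  (phi_unique hk).unique (phi_unique hk).choose_spec.1
    ⟨1, le_refl 1, by simpa using phi_fix hk⟩

lemma hitTime_phi : hitTime (phiFun f) (phi_unique hk) (cfun f ⟨0, hk⟩)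
    = (pfin f).card - 1 := by
  rw [hitTime]
  rw [Nat.find_eq_iff]
  constructor
  · rw [rpt_phi f hk, phi_iter ⟨0, hk⟩ ((pfin f).card - 1) (by simp)]
    exact congrArg (cfun f) (Fin.ext (by simp))
  · intro j hj hspec
    rw [rpt_phi f hk, phi_iter ⟨0, hk⟩ j (by simp; omega)] at hspec
    have := cfun_inj f hspec
    have := congrArg Fin.val this
    simp at this
    omega

lemma qfun_phi (j : Fin (hitTime (phiFun f) (phi_unique hk) (cfun f ⟨0, hk⟩) + 1)) :
    qfun (phiFun f) (phi_unique hk) (cfun f ⟨0, hk⟩) j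
      = cfun f ⟨(j : ℕ), by have := j.2; have hT := hitTime_phi f hk; omega⟩ := by
  have hj : (j : ℕ) ≤ (pfin f).card - 1 := by
    have := j.2; have hT := hitTime_phi f hk; omega
  rw [qfun, phi_iter ⟨0, hk⟩ (j : ℕ) (by simpa using hj)]
  exact congrArg (cfun f) (Fin.ext (by simp))

lemma Qfin_phi : Qfin (phiFun f) (phi_unique hk) (cfun f ⟨0, hk⟩) = pfin f := by
  ext y
  constructor
  · intro hy
    obtain ⟨j, hj⟩ := Qfin_surj _ _ _ hy
    rw [← hj, qfun_phi f hk]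
    exact cfun_mem f _
  · intro hy
    obtain ⟨i, hi⟩ := cfun_surj hy
    have hi2 : (i : ℕ) < hitTime (phiFun f) (phi_unique hk) (cfun f ⟨0, hk⟩) + 1 := by
      have := i.2; have hT := hitTime_phi f hk; omega
    have : qfun (phiFun f) (phi_unique hk) (cfun f ⟨0, hk⟩) ⟨(i : ℕ), hi2⟩ = y := by
      rw [qfun_phi f hk, ← hi]
    rw [← this]
    exact qfun_mem _ _ _ _

lemma psi_phi_eq : psiFun (phiFun f) (phi_unique hk) (cfun f ⟨0, hk⟩) = f := by
  funext y
  by_cases hy : y ∈ Qfin (phiFun f) (phi_unique hk) (cfun f ⟨0, hk⟩)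
  · rw [psiFun, dif_pos hy]
    set j := (dIso (phiFun f) (phi_unique hk) (cfun f ⟨0, hk⟩)).symm ⟨y, hy⟩ with hjdef
    have hjlt : (j : ℕ) < (pfin f).card := by
      have := j.2; have hT := hitTime_phi f hk; omega
    have h1 : ((dIso (phiFun f) (phi_unique hk) (cfun f ⟨0, hk⟩) j :
        {z // z ∈ Qfin (phiFun f) (phi_unique hk) (cfun f ⟨0, hk⟩)}) : Fin n) = y := by
      rw [hjdef]
      exact congrArg Subtype.val
        ((dIso (phiFun f) (phi_unique hk) (cfun f ⟨0, hk⟩)).apply_symm_apply ⟨y, hy⟩)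
    have h2 : ((dIso (phiFun f) (phi_unique hk) (cfun f ⟨0, hk⟩) j : _) : Fin n)
        = ((eIso f ⟨(j : ℕ), hjlt⟩ : {z // z ∈ pfin f}) : Fin n) :=
      orderIsoOfFin_cast (Qfin_phi f hk) (Qfin_card _ _ _) rfl j ⟨(j : ℕ), hjlt⟩ rfl
    rw [qfun_phi f hk]
    have : cfun f ⟨(j : ℕ), hjlt⟩ = f y := by
      rw [cfun, ← h2, h1]
    rw [← this]
  · rw [psiFun_not_mem _ _ _ hy, phiFun_not_mem]
    rwa [Qfin_phi f hk] at hy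

end RT2

noncomputable def joyalEquiv (hn : 1 ≤ n) :
    (Fin n → Fin n) ≃
      {f : Fin n → Fin n // ∃! x : Fin n, ∃ k ≥ 1, f^[k] x = x} × Fin n where
  toFun f := (⟨phiFun f, phi_unique (pfin_card_pos hn f)⟩,
    cfun f ⟨0, pfin_card_pos hn f⟩)
  invFun p := psiFun p.1.1 p.1.2 p.2
  left_inv f := psi_phi_eq f (pfin_card_pos hn f)
  right_inv p := by
    obtain ⟨⟨g, hg⟩, x⟩ := p
    refine Prod.ext ?_ ?_
    · exact Subtype.ext (phi_psi_eq g hg x)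
    · exact phi_psi_x g hg x

theorem card_unique_periodic_point' (hn : 1 ≤ n) :
    Nat.card {f : Fin n → Fin n // ∃! x : Fin n, ∃ k ≥ 1, f^[k] x = x}
      = n ^ (n - 1) := by
  have h1 := Nat.card_congr (joyalEquiv (n := n) hn)
  have h2 : Nat.card (Fin n → Fin n) = n ^ n := by
    simp [Nat.card_eq_fintype_card]
  rw [Nat.card_prod, Nat.card_eq_fintype_card (α := Fin n), Fintype.card_fin, h2] at h1
  have h4 : n ^ n = n ^ (n - 1) * n := by
    rw [← pow_succ]
    congr 1
    omega
  exact Nat.eq_of_mul_eq_mul_right (by omega) (h1.symm.trans h4)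

end JoyalAux

theorem card_unique_periodic_point (n : ℕ) (hn : 1 ≤ n) :
    Nat.card {f : Fin n → Fin n // ∃! x : Fin n, ∃ k ≥ 1, f^[k] x = x}
      = n ^ (n - 1) := by
  exact card_unique_periodic_point' hn
end

section
/- Let M be a transformation monoid on Fin n with n ≥ 1. Then the clique number of Gr(M) equals the chromatic number of Gr(M), and both equal the minimum, over f ∈ M, of the cardinality of the range of f. -/
open SimpleGraph

theorem cliqueNum_Gr_eq_chromaticNumber_eq_min_rank (n : ℕ) (hn : 1 ≤ n)
    (M : Submonoid (Function.End (Fin n))) :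
    (Gr M).cliqueNum = sInf {k : ℕ | ∃ f ∈ M, (Set.range f).ncard = k} ∧
    (Gr M).chromaticNumber = ((sInf {k : ℕ | ∃ f ∈ M, (Set.range f).ncard = k} : ℕ) : ℕ∞) := by
  classical
  set S : Set ℕ := {k : ℕ | ∃ f ∈ M, (Set.range f).ncard = k} with hS
  have hne : S.Nonempty := ⟨(Set.range (1 : Function.End (Fin n))).ncard, 1, M.one_mem, rfl⟩
  obtain ⟨f, hfM, hfr⟩ := Nat.sInf_mem hne
  set r := sInf S with hr
  have hmin : ∀ g ∈ M, r ≤ (Set.range g).ncard := fun g hg => Nat.sInf_le ⟨g, hg, rfl⟩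
  -- the range of f is a clique of size r
  have hclique : (Gr M).IsNClique r (Set.range f).toFinset := by
    constructor
    · intro v hv w hw hvw
      simp only [Finset.mem_coe, Set.mem_toFinset] at hv hw
      refine (⟨hvw, fun g hg hgeq => ?_⟩ : v ≠ w ∧ ∀ g ∈ M, g v ≠ g w)
      -- g * f has smaller rank
      have him : Set.range ((g * f : Function.End (Fin n)) : Fin n → Fin n)
          = g '' Set.range f := by
        rw [Function.End.mul_def]; exact Set.range_comp (g : Fin n → Fin n) (f : Fin n → Fin n)
      have hle : (g '' Set.range f).ncard ≤ (Set.range f).ncard :=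
        Set.ncard_image_le (Set.toFinite _)
      have hne' : (g '' Set.range f).ncard ≠ (Set.range f).ncard := by
        intro h
        have hinj := Set.injOn_of_ncard_image_eq h (Set.toFinite _)
        exact hvw (hinj hv hw hgeq)
      have hlt : (Set.range ((g * f : Function.End (Fin n)) : Fin n → Fin n)).ncard < r := by
        rw [him, ← hfr]
        exact lt_of_le_of_ne hle hne'
      exact absurd (hmin _ (M.mul_mem hg hfM)) (not_le.mpr hlt)
    · rw [Set.ncard_eq_toFinset_card'] at hfr
      exact hfr
  -- clique number lower bound
  have hclow : r ≤ (Gr M).cliqueNum := by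
    have := hclique.isClique.card_le_cliqueNum
    rwa [hclique.card_eq] at this
  -- clique number upper bound : any clique maps injectively by f
  have hcup : (Gr M).cliqueNum ≤ r := by
    obtain ⟨t, ht⟩ := (Gr M).exists_isNClique_cliqueNum
    rw [← ht.card_eq]
    have hinj : Set.InjOn f t := by
      intro v hv w hw hvw
      by_contra hne'
      exact (ht.isClique hv hw hne' : v ≠ w ∧ ∀ g ∈ M, g v ≠ g w).2 f hfM hvw
    calc t.card = (t.image f).card := (Finset.card_image_of_injOn hinj).symm
      _ ≤ (Set.range f).toFinset.card := by
          apply Finset.card_le_card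
          intro x hx
          rw [Set.mem_toFinset]
          obtain ⟨v, _, rfl⟩ := Finset.mem_image.mp hx
          exact Set.mem_range_self v
      _ = r := by rw [← Set.ncard_eq_toFinset_card']; exact hfr
  have hceq : (Gr M).cliqueNum = r := le_antisymm hcup hclow
  refine ⟨hceq, le_antisymm ?_ ?_⟩
  · -- coloring by f
    have C : (Gr M).Coloring (Set.range f) :=
      SimpleGraph.Coloring.mk (fun v => ⟨f v, Set.mem_range_self v⟩)
        (fun hadj h => (hadj : _ ∧ ∀ g ∈ M, g _ ≠ g _).2 f hfM (congrArg Subtype.val h))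
    have hcard : Fintype.card (Set.range f) = r := by
      rw [← Nat.card_eq_fintype_card, Nat.card_coe_set_eq, hfr]
    have := C.colorable.chromaticNumber_le
    rwa [hcard] at this
  · have := hclique.isClique.card_le_chromaticNumber
    rwa [hclique.card_eq] at this
end

section
/- Let M be a transformation monoid on Fin n, and let f ∈ M be an element whose rank is minimal among elements of M. Then the range of f is a clique in the graph Gr(M). -/
open SimpleGraph

theorem range_of_min_rank_isClique (n : ℕ) (M : Submonoid (Function.End (Fin n)))
    (f : Function.End (Fin n)) (hf : f ∈ M)
    (hmin : ∀ g ∈ M, (Set.range f).ncard ≤ (Set.range g).ncard) :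
    (Gr M).IsClique (Set.range f) := by
  rintro _ ⟨a, rfl⟩ _ ⟨b, rfl⟩ hne
  show f a ≠ f b ∧ ∀ g ∈ M, g (f a) ≠ g (f b)
  refine ⟨hne, fun g hg hgeq => ?_⟩
  have hrange : Set.range (g * f) = g '' Set.range f := by
    ext x; simp [Function.End, Set.range_comp]; exact ⟨fun ⟨y, hy⟩ => ⟨f y, ⟨y, rfl⟩, hy⟩, fun ⟨_, ⟨y, rfl⟩, hy⟩ => ⟨y, hy⟩⟩
  have h1 : (Set.range f).ncard ≤ (g '' Set.range f).ncard := by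
    have := hmin (g * f) (M.mul_mem hg hf)
    rwa [hrange] at this
  have h2 : (g '' Set.range f).ncard ≤ (Set.range f).ncard :=
    Set.ncard_image_le (Set.toFinite _)
  have hinj : Set.InjOn g (Set.range f) :=
    Set.injOn_of_ncard_image_eq (le_antisymm h2 h1) (Set.toFinite _)
  exact hne (hinj ⟨a, rfl⟩ ⟨b, rfl⟩ hgeq)
end

section
/- Let M be a transformation monoid on Fin n with n ≥ 1. Then Gr(M) is the graph with no edges (the bottom graph) if and only if M is synchronizing. -/
open SimpleGraph

theorem Gr_eq_bot_iff_synchronizing (n : ℕ) (hn : 1 ≤ n)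
    (M : Submonoid (Function.End (Fin n))) :
    Gr M = ⊥ ↔ IsSynchronizing M := by
  classical
  constructor
  · intro hbot
    -- any two points can be identified by some element of M
    have key : ∀ v w : Fin n, ∃ f ∈ M, f v = f w := by
      intro v w
      by_cases hvw : v = w
      · exact ⟨1, M.one_mem, by rw [hvw]⟩
      · by_contra hc
        push_neg at hc
        have : (Gr M).Adj v w := ⟨hvw, fun f hf => hc f hf⟩
        rw [hbot] at this
        exact this.elim
    -- consider the minimal rank in M
    set P : ℕ → Prop := fun k => ∃ f ∈ M, (Finset.univ.image (f : Fin n → Fin n)).card = k with hP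
    have hPex : ∃ k, P k := ⟨_, 1, M.one_mem, rfl⟩
    obtain ⟨f, hfM, hfcard⟩ := Nat.find_spec hPex
    have hpos : 1 ≤ Nat.find hPex := by
      rw [← hfcard]
      exact Finset.card_pos.mpr (Finset.image_nonempty.mpr
        (Finset.univ_nonempty_iff.mpr ⟨⟨0, hn⟩⟩))
    have hone : Nat.find hPex = 1 := by
      by_contra hne
      have h2 : 2 ≤ (Finset.univ.image (f : Fin n → Fin n)).card := by
        omega
      obtain ⟨v, hv, w, hw, hvw⟩ := Finset.one_lt_card.mp h2
      obtain ⟨a, -, ha⟩ := Finset.mem_image.mp hv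
      obtain ⟨b, -, hb⟩ := Finset.mem_image.mp hw
      obtain ⟨g, hgM, hg⟩ := key v w
      have hlt : (Finset.univ.image ((g * f : Function.End (Fin n)) : Fin n → Fin n)).card
          < Nat.find hPex := by
        have himg : Finset.univ.image ((g * f : Function.End (Fin n)) : Fin n → Fin n)
            = (Finset.univ.image (f : Fin n → Fin n)).image (g : Fin n → Fin n) := by
          exact Finset.image_image.symm
        rw [himg, ← hfcard]
        refine lt_of_le_of_ne (Finset.card_image_le) ?_
        intro hEq
        have hinj := Finset.card_image_iff.mp hEq
        exact hvw (hinj hv hw hg)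
      exact Nat.find_min hPex hlt ⟨g * f, M.mul_mem hgM hfM, rfl⟩
    rw [hone] at hfcard
    obtain ⟨c, hc⟩ := Finset.card_eq_one.mp hfcard
    refine ⟨f, hfM, c, ?_⟩
    ext x
    simp only [Set.mem_range, Set.mem_singleton_iff]
    constructor
    · rintro ⟨y, rfl⟩
      have : f y ∈ Finset.univ.image (f : Fin n → Fin n) :=
        Finset.mem_image_of_mem _ (Finset.mem_univ y)
      rw [hc, Finset.mem_singleton] at this
      exact this
    · intro hx
      have : x ∈ Finset.univ.image (f : Fin n → Fin n) := by
        rw [hc, Finset.mem_singleton]; exact hx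
      obtain ⟨y, -, hy⟩ := Finset.mem_image.mp this
      exact ⟨y, hy⟩
  · rintro ⟨f, hfM, c, hc⟩
    ext v w
    simp only [SimpleGraph.bot_adj, iff_false]
    rintro ⟨-, h2⟩
    refine h2 f hfM ?_
    have hv : f v = c := by
      have : f v ∈ Set.range f := ⟨v, rfl⟩
      rwa [hc] at this
    have hw : f w = c := by
      have : f w ∈ Set.range f := ⟨w, rfl⟩
      rwa [hc] at this
    rw [hv, hw]
end

section
/- Let M be a transformation monoid on Fin n. Then Gr(End(Gr(M))) = Gr(M). -/
open SimpleGraph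

theorem Gr_graphEnd_Gr (n : ℕ) (M : Submonoid (Function.End (Fin n))) :
    Gr (GraphEnd (Gr M)) = Gr M := by
  ext v w
  constructor
  · rintro ⟨hne, h⟩
    refine ⟨hne, fun f hf => ?_⟩
    refine h f (fun a b hab => ⟨hab.2 f hf, fun g hg => ?_⟩)
    exact hab.2 (g * f) (M.mul_mem hg hf)
  · rintro ⟨hne, h⟩
    refine ⟨hne, fun f hf => ?_⟩
    exact (hf ⟨hne, h⟩).1
end

section
/- For every simple graph X on Fin n, Hull(Hull(X)) = Hull(X), where Hull(X) = Gr(End(X)). In particular, a graph is the hull of some graph if and only if it equals its own hull. -/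
open SimpleGraph

theorem hull_idem {n : ℕ} (X : SimpleGraph (Fin n)) : Hull (Hull X) = Hull X := by
  ext v w
  simp only [Hull, Gr]
  constructor
  · rintro ⟨hne, h⟩
    refine ⟨hne, fun f hf => h f ?_⟩
    intro a b hab
    exact ⟨hab.2 f hf, fun g hg => hab.2 (g * f) (mul_mem hg hf)⟩
  · intro hvw
    exact ⟨hvw.1, fun f hf => (hf hvw).1⟩

theorem hull_idempotent (n : ℕ) (X : SimpleGraph (Fin n)) :
    Hull (Hull X) = Hull X ∧ ((∃ Y : SimpleGraph (Fin n), X = Hull Y) ↔ Hull X = X) := by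
  refine ⟨hull_idem X, ⟨fun ⟨Y, hY⟩ => by rw [hY, hull_idem], fun h => ⟨X, h.symm⟩⟩⟩
end

section
/- Let X be a simple graph on Fin n with clique number m, and let X' be the derived graph of X: the spanning subgraph of X whose edges are exactly those edges of X that are contained in some clique of X of cardinality m. Then every endomorphism of X is an endomorphism of X', i.e., End(X) ≤ End(X'). -/
open SimpleGraph

theorem graphEnd_le_graphEnd_derived (n : ℕ) (X : SimpleGraph (Fin n)) (m : ℕ)
    (hm : X.cliqueNum = m) : GraphEnd X ≤ GraphEnd (derivedGraph X) := by
  intro f hf v w hvw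
  obtain ⟨hadj, s, hs, hv, hw⟩ := hvw
  refine ⟨hf hadj, s.image f, ?_, Finset.mem_image_of_mem f hv, Finset.mem_image_of_mem f hw⟩
  have hinj : Set.InjOn f s := by
    intro a ha b hb hab
    by_contra hne
    have := hf (hs.1 ha hb hne)
    rw [hab] at this
    exact this.ne rfl
  constructor
  · intro x hx y hy hxy
    replace hx := Finset.mem_image.mp hx
    replace hy := Finset.mem_image.mp hy
    obtain ⟨a, ha, rfl⟩ := hx
    obtain ⟨b, hb, rfl⟩ := hy
    exact hf (hs.1 ha hb (fun h => hxy (by rw [h])))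
  · rw [Finset.card_image_of_injOn hinj, hs.2]
end

section
/- Let n ≥ 2 and let M be a maximal non-synchronizing submonoid of Function.End (Fin n), i.e., M is not synchronizing and every submonoid strictly containing M is synchronizing. Then there exist simple graphs X and Y on Fin n such that: (a) End(X) = End(Y) = M; (b) ω(X) = ω(Y) = χ(X) = χ(Y) (clique numbers and chromatic numbers all agree); (c) X = Hull(Y); and (d) Y = X' (Y is the derived graph of X). -/
open SimpleGraph

theorem maximal_non_synchronizing_structure (n : ℕ) (hn : 2 ≤ n)
    (M : Submonoid (Function.End (Fin n)))
    (hM : ¬ IsSynchronizing M)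
    (hmax : ∀ N : Submonoid (Function.End (Fin n)), M < N → IsSynchronizing N) :
    ∃ X Y : SimpleGraph (Fin n),
      GraphEnd X = M ∧ GraphEnd Y = M ∧
      X.cliqueNum = Y.cliqueNum ∧
      X.chromaticNumber = (X.cliqueNum : ℕ∞) ∧
      Y.chromaticNumber = (Y.cliqueNum : ℕ∞) ∧
      X = Hull Y ∧ Y = derivedGraph X := by
  classical
  have hfin : (0 : ℕ) < n := by omega
  -- rank
  set rk : Function.End (Fin n) → ℕ := fun f => (Finset.univ.image f).card with hrk
  have : Nonempty (Fin n) := ⟨⟨0, hfin⟩⟩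
  have hrkpos : ∀ f : Function.End (Fin n), 0 < rk f := by
    intro f
    exact Finset.card_pos.mpr ((Finset.univ_nonempty).image f)
  set R : Set ℕ := {k | ∃ f ∈ M, rk f = k} with hR
  have hRne : R.Nonempty := ⟨rk 1, 1, M.one_mem, rfl⟩
  set r : ℕ := sInf R with hr
  obtain ⟨f₀, hf₀M, hf₀r⟩ : ∃ f ∈ M, rk f = r := Nat.sInf_mem hRne
  have hrange_of_rk1 : ∀ f : Function.End (Fin n), rk f = 1 → ∃ c, Set.range f = {c} := by
    intro f hf
    obtain ⟨c, hc⟩ := Finset.card_eq_one.mp hf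
    refine ⟨c, ?_⟩
    have : Set.range f = ↑(Finset.univ.image f) := by
      ext x; exact ⟨fun ⟨a, ha⟩ => Finset.mem_coe.mpr (Finset.mem_image.mpr ⟨a, Finset.mem_univ a, ha⟩), fun hx => by obtain ⟨a, _, ha⟩ := Finset.mem_image.mp (Finset.mem_coe.mp hx); exact ⟨a, ha⟩⟩
    rw [this, hc]; simp
  have hr2 : 2 ≤ r := by
    by_contra h
    have h1 : r = 1 := by have := hrkpos f₀; omega
    exact hM ⟨f₀, hf₀M, hrange_of_rk1 f₀ (hf₀r.trans h1)⟩
  -- minimality key lemma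
  have hkey : ∀ g ∈ M, ∀ u w, u ∈ Finset.univ.image f₀ → w ∈ Finset.univ.image f₀ →
      g u = g w → u = w := by
    intro g hg u w hu hw hguw
    by_contra hne
    have hmem : rk (g * f₀) ∈ R := ⟨g * f₀, M.mul_mem hg hf₀M, rfl⟩
    have hle : r ≤ rk (g * f₀) := Nat.sInf_le hmem
    have himg : Finset.univ.image (g * f₀) = (Finset.univ.image f₀).image g := by
      exact Finset.image_image.symm
    have hsub : (Finset.univ.image f₀).image g ⊆ ((Finset.univ.image f₀).erase w).image g := by
      intro x hx
      obtain ⟨y, hy, rfl⟩ := Finset.mem_image.mp hx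
      by_cases hyw : y = w
      · exact Finset.mem_image.mpr ⟨u, Finset.mem_erase.mpr ⟨hne, hu⟩, by rw [hyw, ← hguw]⟩
      · exact Finset.mem_image.mpr ⟨y, Finset.mem_erase.mpr ⟨hyw, hy⟩, rfl⟩
    have hcard : rk (g * f₀) ≤ r - 1 := by
      calc rk (g * f₀) = ((Finset.univ.image f₀).image g).card := by rw [hrk]; simp only; rw [himg]
        _ ≤ (((Finset.univ.image f₀).erase w).image g).card := Finset.card_le_card hsub
        _ ≤ ((Finset.univ.image f₀).erase w).card := Finset.card_image_le
        _ = r - 1 := by rw [Finset.card_erase_of_mem hw]; exact congrArg (· - 1) hf₀r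
    omega
  set X : SimpleGraph (Fin n) := Gr M with hX
  -- M ⊆ End X
  have hMX : ∀ f ∈ M, f ∈ GraphEnd X := by
    intro f hf v w hadj
    refine ⟨hadj.2 f hf, fun g hg => ?_⟩
    have := hadj.2 (g * f) (M.mul_mem hg hf)
    exact this
  -- the image of f₀ is an r-clique of X
  set s₀ : Finset (Fin n) := Finset.univ.image f₀ with hs₀
  have hcards : s₀.card = r := hf₀r
  have hclq : X.IsNClique r s₀ := by
    constructor
    · intro u hu w hw hne
      exact ⟨hne, fun g hg hgeq => hne (hkey g hg u w hu hw hgeq)⟩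
    · exact hf₀r
  -- X has an edge
  obtain ⟨u₀, hu₀, w₀, hw₀, huw₀⟩ := Finset.one_lt_card.mp (by rw [hcards]; omega)
  have hedgeX : X.Adj u₀ w₀ := hclq.isClique hu₀ hw₀ huw₀
  -- any monoid of endomorphisms of a graph with an edge is non-synchronizing
  have hnonsync : ∀ Z : SimpleGraph (Fin n), ∀ a b : Fin n, Z.Adj a b →
      ¬ IsSynchronizing (GraphEnd Z) := by
    rintro Z a b hab ⟨f, hf, c, hc⟩
    have hfa : f a = c := by
      have : f a ∈ Set.range f := ⟨a, rfl⟩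
      rwa [hc] at this
    have hfb : f b = c := by
      have : f b ∈ Set.range f := ⟨b, rfl⟩
      rwa [hc] at this
    have := hf hab
    rw [hfa, hfb] at this
    exact Z.loopless.irrefl c this
  -- M = End X
  have hEndX : GraphEnd X = M := by
    by_contra hne
    have hlt : M < GraphEnd X := lt_of_le_of_ne (fun f hf => hMX f hf) (Ne.symm hne)
    exact hnonsync X u₀ w₀ hedgeX (hmax _ hlt)
  -- coloring: any graph ≤ X is r-colorable via f₀
  have hcolor : ∀ Z : SimpleGraph (Fin n), Z ≤ X → Z.Colorable r := by
    intro Z hZ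
    have C : Z.Coloring {x // x ∈ s₀} :=
      Coloring.mk (fun v => ⟨f₀ v, Finset.mem_image_of_mem f₀ (Finset.mem_univ v)⟩)
        (by
          intro v w hadj h
          exact (hZ hadj).2 f₀ hf₀M (congrArg Subtype.val h))
    have := C.colorable
    rwa [Fintype.card_coe, hcards] at this
  -- cliqueNum X = r
  have hωX : X.cliqueNum = r := by
    apply le_antisymm
    · obtain ⟨s, hs⟩ := X.exists_isNClique_cliqueNum
      have := hs.isClique.card_le_of_colorable (hcolor X le_rfl)
      rwa [hs.card_eq] at this
    · have := hclq.isClique.card_le_cliqueNum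
      rwa [hclq.card_eq] at this
  -- chromatic number helper
  have hχ : ∀ Z : SimpleGraph (Fin n), Z ≤ X → Z.IsNClique r s₀ →
      Z.chromaticNumber = (r : ℕ∞) := by
    intro Z hZ hclqZ
    apply le_antisymm
    · exact (hcolor Z hZ).chromaticNumber_le
    · rw [chromaticNumber_eq_biInf]
      refine le_iInf₂ fun m hm => ?_
      have := hclqZ.isClique.card_le_of_colorable hm
      rw [hclqZ.card_eq] at this
      exact_mod_cast this
  set Y : SimpleGraph (Fin n) := derivedGraph X with hY
  have hYX : Y ≤ X := fun v w h => h.1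
  -- s₀ is an r-clique of Y
  have hclqY : Y.IsNClique r s₀ := by
    constructor
    · intro u hu w hw hne
      exact ⟨hclq.isClique hu hw hne, s₀, hωX ▸ hclq, hu, hw⟩
    · exact hf₀r
  -- M ⊆ End Y
  have hMY : ∀ f ∈ M, f ∈ GraphEnd Y := by
    intro f hf v w hadj
    obtain ⟨hxadj, s, hs, hv, hw⟩ := hadj
    have hfX : f ∈ GraphEnd X := hMX f hf
    have hinj : Set.InjOn f ↑s := by
      intro a ha b hb hab
      by_contra hne
      exact (hfX (hs.isClique ha hb hne)).ne hab
    have hsimg : X.IsNClique X.cliqueNum (s.image f) := by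
      constructor
      · intro x hx y hy hne
        obtain ⟨a, ha, rfl⟩ := Finset.mem_image.mp (by exact_mod_cast hx)
        obtain ⟨b, hb, rfl⟩ := Finset.mem_image.mp (by exact_mod_cast hy)
        have hab : a ≠ b := fun h => hne (by rw [h])
        exact hfX (hs.isClique ha hb hab)
      · rw [Finset.card_image_of_injOn hinj, hs.card_eq]
    exact ⟨hfX hxadj, s.image f, hsimg,
      Finset.mem_image_of_mem f hv, Finset.mem_image_of_mem f hw⟩
  -- Y has an edge
  have hedgeY : Y.Adj u₀ w₀ := hclqY.isClique hu₀ hw₀ huw₀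
  have hEndY : GraphEnd Y = M := by
    by_contra hne
    have hlt : M < GraphEnd Y := lt_of_le_of_ne (fun f hf => hMY f hf) (Ne.symm hne)
    exact hnonsync Y u₀ w₀ hedgeY (hmax _ hlt)
  -- cliqueNum Y = r
  have hωY : Y.cliqueNum = r := by
    apply le_antisymm
    · obtain ⟨s, hs⟩ := Y.exists_isNClique_cliqueNum
      have hXc : X.IsClique ↑s := hs.isClique.mono hYX
      have := hXc.card_le_cliqueNum
      rw [hs.card_eq, hωX] at this
      exact this
    · have := hclqY.isClique.card_le_cliqueNum
      rwa [hclqY.card_eq] at this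
  refine ⟨X, Y, hEndX, hEndY, by rw [hωX, hωY], ?_, ?_, ?_, rfl⟩
  · rw [hωX]; exact hχ X le_rfl hclq
  · rw [hωY]; exact hχ Y hYX hclqY
  · show X = Gr (GraphEnd Y)
    rw [hEndY]
end

section
/- Let X be a simple graph on Fin n which has at least one edge, satisfies Hull(X) = X, and in which every edge is contained in a clique of size ω(X). Then End(X) is a maximal non-synchronizing submonoid of Function.End (Fin n): End(X) is not synchronizing, and every submonoid of Function.End (Fin n) strictly containing End(X) is synchronizing. -/
open SimpleGraph

section Aux

variable {n : ℕ} {X : SimpleGraph (Fin n)}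

lemma mem_graphEnd {f : Function.End (Fin n)} :
    f ∈ GraphEnd X ↔ ∀ ⦃v w⦄, X.Adj v w → X.Adj (f v) (f w) := Iff.rfl

/-- From the hull condition: any two distinct non-adjacent vertices are merged by
some endomorphism. -/
lemma merge_of_not_adj (hhull : Hull X = X) {v w : Fin n} (hne : v ≠ w)
    (hna : ¬ X.Adj v w) : ∃ e ∈ GraphEnd X, e v = e w := by
  by_contra hc
  push_neg at hc
  exact hna (hhull ▸ (And.intro hne hc : (Hull X).Adj v w))

/-- There is an endomorphism whose range is a maximum clique. -/
lemma exists_endo_range_maxclique (hhull : Hull X = X)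
    {C : Finset (Fin n)} (hC : X.IsNClique X.cliqueNum C) :
    ∃ e ∈ GraphEnd X, X.IsNClique X.cliqueNum (Finset.image e Finset.univ) := by
  classical
  -- any endomorphism has range of size at least the clique number
  have hlow : ∀ e : Function.End (Fin n), e ∈ GraphEnd X →
      X.cliqueNum ≤ (Finset.image e Finset.univ).card := by
    intro e he
    have hinj : Set.InjOn e (C : Set (Fin n)) := by
      intro a ha b hb hab
      by_contra hneq
      have hadj := he (hC.isClique ha hb hneq)
      rw [hab] at hadj
      exact X.loopless.irrefl _ hadj
    calc X.cliqueNum = C.card := hC.card_eq.symm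
      _ ≤ (Finset.image e Finset.univ).card := by
          apply Finset.card_le_card_of_injOn e (fun a _ => Finset.mem_image_of_mem e
            (Finset.mem_univ a)) hinj
  suffices h : ∀ k (e : Function.End (Fin n)), e ∈ GraphEnd X →
      (Finset.image e Finset.univ).card = k →
      ∃ e ∈ GraphEnd X, X.IsNClique X.cliqueNum (Finset.image e Finset.univ) by
    exact h _ 1 (one_mem _) rfl
  intro k
  induction k using Nat.strong_induction_on with
  | _ k ih =>
    intro e he hk
    by_cases hcl : X.IsClique (Finset.image e Finset.univ : Finset (Fin n))
    · refine ⟨e, he, hcl, le_antisymm ?_ (hlow e he)⟩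
      exact hcl.card_le_cliqueNum
    · -- find two distinct non-adjacent elements of the range and merge them
      rw [SimpleGraph.isClique_iff] at hcl
      rw [Set.Pairwise] at hcl
      push_neg at hcl
      obtain ⟨a, ha, b, hb, hab, hnadj⟩ := hcl
      obtain ⟨m, hm, hmab⟩ := merge_of_not_adj hhull hab hnadj
      have hlt : (Finset.image (m * e) Finset.univ).card < k := by
        have him : Finset.image (m * e) Finset.univ
            = Finset.image m (Finset.image e Finset.univ) := by
          rw [Finset.image_image (f := e) (g := m)]
          rfl
        rw [him, ← hk]
        rcases lt_or_eq_of_le (Finset.card_image_le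
          (s := Finset.image e Finset.univ) (f := m)) with h | h
        · exact h
        · exfalso
          have := Finset.injOn_of_card_image_eq h
          exact hab (this ha hb hmab)
      exact ih _ hlt (m * e) (mul_mem hm he) rfl

/-- Given an edge `a b` and an edge `v w` (lying in a maximum clique `S`), there is
an endomorphism sending `a ↦ v` and `b ↦ w`. -/
lemma exists_endo_map_pair (hhull : Hull X = X)
    {S : Finset (Fin n)} (hS : X.IsNClique X.cliqueNum S)
    {a b v w : Fin n} (hab : X.Adj a b) (hvw : v ≠ w) (hv : v ∈ S) (hw : w ∈ S) :
    ∃ e ∈ GraphEnd X, e a = v ∧ e b = w := by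
  classical
  obtain ⟨e₀, he₀, hT⟩ := exists_endo_range_maxclique hhull hS
  set T : Finset (Fin n) := Finset.image e₀ Finset.univ with hTdef
  have hmem : ∀ x : Fin n, e₀ x ∈ T := fun x =>
    Finset.mem_image_of_mem e₀ (Finset.mem_univ x)
  have hcard : T.card = S.card := by rw [hT.card_eq, hS.card_eq]
  set E₀ : (T : Finset (Fin n)) ≃ (S : Finset (Fin n)) := Finset.equivOfCardEq hcard with hE₀
  have hab' : e₀ a ≠ e₀ b := by
    intro h
    have := he₀ hab
    rw [h] at this
    exact X.loopless.irrefl _ this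
  set A : (S : Finset (Fin n)) := E₀ ⟨e₀ a, hmem a⟩ with hA
  set B : (S : Finset (Fin n)) := E₀ ⟨e₀ b, hmem b⟩ with hB
  have hAB : A ≠ B := by
    simp only [hA, hB]
    intro h
    exact hab' (Subtype.ext_iff.mp (E₀.injective h))
  set v' : (S : Finset (Fin n)) := ⟨v, hv⟩ with hv'
  set w' : (S : Finset (Fin n)) := ⟨w, hw⟩ with hw'
  have hvw' : v' ≠ w' := fun h => hvw (Subtype.ext_iff.mp h)
  set τ₁ := Equiv.swap A v' with hτ₁
  set τ₂ := Equiv.swap (τ₁ B) w' with hτ₂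
  set E : (T : Finset (Fin n)) ≃ (S : Finset (Fin n)) := E₀.trans (τ₁.trans τ₂) with hE
  have hEa : E ⟨e₀ a, hmem a⟩ = v' := by
    have h1 : τ₁ A = v' := Equiv.swap_apply_left _ _
    have h2 : τ₁ B ≠ v' := by
      intro h
      exact hAB (τ₁.injective (h.trans h1.symm)).symm
    simp only [hE, Equiv.trans_apply, ← hA, h1]
    exact Equiv.swap_apply_of_ne_of_ne h2.symm hvw'
  have hEb : E ⟨e₀ b, hmem b⟩ = w' := by
    simp only [hE, Equiv.trans_apply, ← hB]
    exact Equiv.swap_apply_left _ _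
  refine ⟨fun x => (E ⟨e₀ x, hmem x⟩ : Fin n), ?_, ?_, ?_⟩
  · intro x y hxy
    have hadj := he₀ hxy
    have hne : e₀ x ≠ e₀ y := hadj.ne
    have hne' : (E ⟨e₀ x, hmem x⟩ : Fin n) ≠ (E ⟨e₀ y, hmem y⟩ : Fin n) := by
      intro h
      exact hne (Subtype.ext_iff.mp (E.injective (Subtype.ext h)))
    exact hS.isClique (E ⟨e₀ x, hmem x⟩).2 (E ⟨e₀ y, hmem y⟩).2 hne'
  · show ((E ⟨e₀ a, hmem a⟩ : {x // x ∈ S}) : Fin n) = v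
    exact congrArg Subtype.val hEa
  · show ((E ⟨e₀ b, hmem b⟩ : {x // x ∈ S}) : Fin n) = w
    exact congrArg Subtype.val hEb

/-- Descent: if a submonoid containing `End X` contains an element collapsing an
edge of `X`, it is synchronizing. -/
lemma synchronizing_of_collapse (hhull : Hull X = X)
    (hcl : ∀ v w : Fin n, X.Adj v w →
      ∃ s : Finset (Fin n), X.IsNClique X.cliqueNum s ∧ v ∈ s ∧ w ∈ s)
    {N : Submonoid (Function.End (Fin n))} (hXN : GraphEnd X ≤ N)
    {h : Function.End (Fin n)} (hhN : h ∈ N) {v w : Fin n} (hvw : X.Adj v w)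
    (hcol : h v = h w) : IsSynchronizing N := by
  classical
  obtain ⟨S, hS, hvS, hwS⟩ := hcl v w hvw
  suffices key : ∀ k (g : Function.End (Fin n)), g ∈ N →
      (Finset.image g Finset.univ).card = k → IsSynchronizing N by
    exact key _ h hhN rfl
  intro k
  induction k using Nat.strong_induction_on with
  | _ k ih =>
    intro g hgN hk
    have hne : (Finset.image g Finset.univ).Nonempty :=
      ⟨g v, Finset.mem_image_of_mem g (Finset.mem_univ v)⟩
    rcases eq_or_lt_of_le (Finset.one_le_card.mpr hne) with h1 | h2
    · -- rank 1 : synchronizing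
      obtain ⟨c, hc⟩ := Finset.card_eq_one.mp h1.symm
      refine ⟨g, hgN, c, ?_⟩
      ext x
      simp only [Set.mem_range, Set.mem_singleton_iff]
      constructor
      · rintro ⟨y, rfl⟩
        have : g y ∈ Finset.image g Finset.univ :=
          Finset.mem_image_of_mem g (Finset.mem_univ y)
        rw [hc] at this
        exact Finset.mem_singleton.mp this
      · intro hx
        have : x ∈ Finset.image g Finset.univ := by
          rw [hc, hx]; exact Finset.mem_singleton_self c
        obtain ⟨y, _, hy⟩ := Finset.mem_image.mp this
        exact ⟨y, hy⟩
    · -- rank ≥ 2 : find a strictly smaller rank element of N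
      obtain ⟨a, ha, b, hb, hab⟩ := Finset.one_lt_card.mp h2
      by_cases hadj : X.Adj a b
      · -- map a ↦ v, b ↦ w by an endomorphism, then collapse with h
        obtain ⟨e, he, hea, heb⟩ := exists_endo_map_pair hhull hS hadj hvw.ne hvS hwS
        set g' : Function.End (Fin n) := h * (e * g) with hg'
        have hg'N : g' ∈ N := mul_mem hhN (mul_mem (hXN he) hgN)
        have him : Finset.image g' Finset.univ
            = Finset.image h (Finset.image e (Finset.image g Finset.univ)) := by
          rw [Finset.image_image (f := g) (g := e), Finset.image_image (f := e ∘ g) (g := h)]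
          rfl
        have hsub : (Finset.image e (Finset.image g Finset.univ)).card
            ≤ (Finset.image g Finset.univ).card := Finset.card_image_le
        have hvI : v ∈ Finset.image e (Finset.image g Finset.univ) := by
          rw [← hea]; exact Finset.mem_image_of_mem e ha
        have hwI : w ∈ Finset.image e (Finset.image g Finset.univ) := by
          rw [← heb]; exact Finset.mem_image_of_mem e hb
        have hlt : (Finset.image g' Finset.univ).card < k := by
          rw [him, ← hk]
          refine lt_of_lt_of_le ?_ hsub
          rcases lt_or_eq_of_le (Finset.card_image_le
            (s := Finset.image e (Finset.image g Finset.univ)) (f := h)) with hlt' | heq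
          · exact hlt'
          · exact absurd (Finset.injOn_of_card_image_eq heq hvI hwI hcol) hvw.ne
        exact ih _ hlt g' hg'N rfl
      · -- merge the non-adjacent pair by an endomorphism
        obtain ⟨m, hm, hmab⟩ := merge_of_not_adj hhull hab hadj
        set g' : Function.End (Fin n) := m * g with hg'
        have hg'N : g' ∈ N := mul_mem (hXN hm) hgN
        have him : Finset.image g' Finset.univ
            = Finset.image m (Finset.image g Finset.univ) := by
          rw [Finset.image_image (f := g) (g := m)]; rfl
        have hlt : (Finset.image g' Finset.univ).card < k := by
          rw [him, ← hk]
          rcases lt_or_eq_of_le (Finset.card_image_le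
            (s := Finset.image g Finset.univ) (f := m)) with hlt' | heq
          · exact hlt'
          · exact absurd (Finset.injOn_of_card_image_eq heq ha hb hmab) hab
        exact ih _ hlt g' hg'N rfl

end Aux

theorem hull_graph_end_maximal_non_synchronizing (n : ℕ) (X : SimpleGraph (Fin n))
    (hedge : ∃ v w : Fin n, X.Adj v w)
    (hhull : Hull X = X)
    (hcl : ∀ v w : Fin n, X.Adj v w →
      ∃ s : Finset (Fin n), X.IsNClique X.cliqueNum s ∧ v ∈ s ∧ w ∈ s) :
    ¬ IsSynchronizing (GraphEnd X) ∧
      ∀ N : Submonoid (Function.End (Fin n)), GraphEnd X < N → IsSynchronizing N := by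
  classical
  obtain ⟨v₀, w₀, hvw₀⟩ := hedge
  constructor
  · rintro ⟨f, hf, c, hc⟩
    have hadj : X.Adj (f v₀) (f w₀) := hf hvw₀
    have h1 : f v₀ = c := by
      have : f v₀ ∈ Set.range f := ⟨v₀, rfl⟩
      rwa [hc] at this
    have h2 : f w₀ = c := by
      have : f w₀ ∈ Set.range f := ⟨w₀, rfl⟩
      rwa [hc] at this
    rw [h1, h2] at hadj
    exact X.loopless.irrefl c hadj
  · intro N hlt
    obtain ⟨g, hgN, hgE⟩ := SetLike.exists_of_lt hlt
    have : ¬ ∀ ⦃v w : Fin n⦄, X.Adj v w → X.Adj (g v) (g w) := hgE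
    push_neg at this
    obtain ⟨v, w, hvw, hna⟩ := this
    by_cases hcol : g v = g w
    · exact synchronizing_of_collapse hhull hcl hlt.le hgN hvw hcol
    · obtain ⟨m, hm, hmvw⟩ := merge_of_not_adj hhull hcol hna
      have hmgN : m * g ∈ N := mul_mem (hlt.le hm) hgN
      have hcol' : (m * g) v = (m * g) w := hmvw
      exact synchronizing_of_collapse hhull hcl hlt.le hmgN hvw hcol'
end

section
/- Let X be a simple graph on Fin n with χ(X) = ω(X) in which every edge is contained in a clique of size ω(X). Then End(X) acts transitively on ordered edges: for any two edges {v, w} and {v', w'} of X there exists an endomorphism h of X with h v = v' and h w = w'. -/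
open SimpleGraph

theorem end_transitive_on_edges (n : ℕ) (X : SimpleGraph (Fin n))
    (hchrom : X.chromaticNumber = (X.cliqueNum : ℕ∞))
    (hcl : ∀ v w : Fin n, X.Adj v w →
      ∃ s : Finset (Fin n), X.IsNClique X.cliqueNum s ∧ v ∈ s ∧ w ∈ s) :
    ∀ v w v' w' : Fin n, X.Adj v w → X.Adj v' w' →
      ∃ h ∈ GraphEnd X, h v = v' ∧ h w = w' := by
  intro v w v' w' hvw hv'w'
  -- a proper coloring with ω colors
  have hcol : X.Colorable X.cliqueNum := by
    rw [← chromaticNumber_le_iff_colorable, hchrom]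
  obtain ⟨C⟩ := hcol
  -- a maximum clique containing v', w'
  obtain ⟨s, hs, hv's, hw's⟩ := hcl v' w' hv'w'
  -- bijection Fin ω ≃ s
  have hcard : s.card = X.cliqueNum := hs.2
  let e0 : Fin X.cliqueNum ≃ {x // x ∈ s} := (s.equivFin.trans (finCongr hcard)).symm
  have hne : v' ≠ w' := hv'w'.ne
  let V' : {x // x ∈ s} := ⟨v', hv's⟩
  let W' : {x // x ∈ s} := ⟨w', hw's⟩
  let e1 : Fin X.cliqueNum ≃ {x // x ∈ s} := (Equiv.swap (C v) (e0.symm V')).trans e0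
  have he1v : e1 (C v) = V' := by simp [e1]
  have hCvw : C v ≠ C w := C.valid hvw
  have h1 : e1.symm W' ≠ C v := by
    intro h
    apply hne
    have : e1 (C v) = W' := by rw [← h, Equiv.apply_symm_apply]
    rw [he1v] at this
    exact (congrArg Subtype.val this.symm).symm
  let e2 : Fin X.cliqueNum ≃ {x // x ∈ s} := (Equiv.swap (C w) (e1.symm W')).trans e1
  have he2w : e2 (C w) = W' := by simp [e2]
  have he2v : e2 (C v) = V' := by
    have : Equiv.swap (C w) (e1.symm W') (C v) = C v :=
      Equiv.swap_apply_of_ne_of_ne hCvw (Ne.symm h1)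
    simp only [e2, Equiv.trans_apply, this, he1v]
  refine ⟨fun x => (e2 (C x) : Fin n), ?_, ?_, ?_⟩
  · intro a b hab
    have hne' : e2 (C a) ≠ e2 (C b) := fun h => C.valid hab (e2.injective h)
    exact hs.1 (e2 (C a)).2 (e2 (C b)).2 (fun h => hne' (Subtype.ext h))
  · exact congrArg Subtype.val he2v
  · exact congrArg Subtype.val he2w
end

section
/- Let n > 2 and let S be a set of functions Fin n → Fin n whose generated submonoid is all of Function.End (Fin n). Then S contains at least one function that is not a bijection and at least two distinct functions that are bijections. In particular, the full transformation monoid on Fin n cannot be generated by fewer than three elements. -/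
open SimpleGraph

lemma bij_of_mul_bij {n : ℕ} {f g : Function.End (Fin n)}
    (h : Function.Bijective (f * g)) :
    Function.Bijective f ∧ Function.Bijective g := by
  have hcomp : (f * g : Function.End (Fin n)) = f ∘ g := rfl
  rw [hcomp] at h
  exact ⟨(Finite.surjective_iff_bijective).mp (Function.Surjective.of_comp h.2),
    (Finite.injective_iff_bijective).mp (Function.Injective.of_comp h.1)⟩

lemma mem_closure_bij {n : ℕ} {S : Set (Function.End (Fin n))}
    {x : Function.End (Fin n)} (hx : x ∈ Submonoid.closure S) :
    Function.Bijective x → x ∈ Submonoid.closure {f ∈ S | Function.Bijective f} := by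
  induction hx using Submonoid.closure_induction with
  | mem y hy => exact fun hb => Submonoid.subset_closure ⟨hy, hb⟩
  | one => exact fun _ => Submonoid.one_mem _
  | mul a b ha hb iha ihb =>
      intro hab
      obtain ⟨h1, h2⟩ := bij_of_mul_bij hab
      exact Submonoid.mul_mem _ (iha h1) (ihb h2)

lemma all_bij_closure {n : ℕ} {S : Set (Function.End (Fin n))}
    (hall : ∀ f ∈ S, Function.Bijective f)
    {x : Function.End (Fin n)} (hx : x ∈ Submonoid.closure S) :
    Function.Bijective x := by
  induction hx using Submonoid.closure_induction with
  | mem y hy => exact hall y hy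
  | one => exact Function.bijective_id
  | mul a b ha hb iha ihb => exact iha.comp ihb

theorem generating_set_of_full_transformation_monoid (n : ℕ) (hn : 2 < n)
    (S : Set (Function.End (Fin n))) (hS : Submonoid.closure S = ⊤) :
    (∃ f ∈ S, ¬ Function.Bijective f) ∧
    (∃ g ∈ S, ∃ h ∈ S, g ≠ h ∧ Function.Bijective g ∧ Function.Bijective h) ∧
    3 ≤ S.ncard := by
  set v0 : Fin n := ⟨0, by omega⟩ with hv0
  set v1 : Fin n := ⟨1, by omega⟩ with hv1
  set v2 : Fin n := ⟨2, by omega⟩ with hv2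
  have h01 : v0 ≠ v1 := by simp [hv0, hv1, Fin.ext_iff]
  have h02 : v0 ≠ v2 := by simp [hv0, hv2, Fin.ext_iff]
  have h12 : v1 ≠ v2 := by simp [hv1, hv2, Fin.ext_iff]
  -- Part 1
  have part1 : ∃ f ∈ S, ¬ Function.Bijective f := by
    by_contra hcon
    push_neg at hcon
    have hz : (fun _ => v0 : Function.End (Fin n)) ∈ Submonoid.closure S := by
      rw [hS]; trivial
    have := all_bij_closure hcon hz
    exact h01 (this.1 (show v0 = v0 from rfl))
  -- Part 2
  have part2 : ∃ g ∈ S, ∃ h ∈ S, g ≠ h ∧ Function.Bijective g ∧ Function.Bijective h := by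
    by_contra hcon
    push_neg at hcon
    -- the set of bijective elements of S is a subsingleton
    have hsub : ∀ a ∈ {f ∈ S | Function.Bijective f}, ∀ b ∈ {f ∈ S | Function.Bijective f},
        a = b := by
      intro a ha b hb
      by_contra hne
      exact (hcon a ha.1 b hb.1 hne ha.2) hb.2
    obtain ⟨g, hg⟩ : ∃ g, {f ∈ S | Function.Bijective f} ⊆ {g} := by
      by_cases hne : ({f ∈ S | Function.Bijective f} : Set _).Nonempty
      · obtain ⟨g, hg⟩ := hne
        exact ⟨g, fun a ha => hsub a ha g hg⟩
      · exact ⟨1, fun a ha => absurd ⟨a, ha⟩ hne⟩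
    set σ : Function.End (Fin n) := ⇑(Equiv.swap v0 v1) with hσ
    set τ : Function.End (Fin n) := ⇑(Equiv.swap v1 v2) with hτ
    have hσb : Function.Bijective σ := (Equiv.swap v0 v1).bijective
    have hτb : Function.Bijective τ := (Equiv.swap v1 v2).bijective
    have hσm : σ ∈ Submonoid.closure {g} :=
      Submonoid.closure_mono hg (mem_closure_bij (by rw [hS]; trivial) hσb)
    have hτm : τ ∈ Submonoid.closure {g} :=
      Submonoid.closure_mono hg (mem_closure_bij (by rw [hS]; trivial) hτb)
    obtain ⟨a, ha⟩ := Submonoid.mem_closure_singleton.mp hσm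
    obtain ⟨b, hb⟩ := Submonoid.mem_closure_singleton.mp hτm
    have hcomm : σ * τ = τ * σ := by rw [← ha, ← hb, pow_mul_comm]
    have heval : (σ * τ) v0 = (τ * σ) v0 := by rw [hcomm]
    have e1 : (σ * τ) v0 = v1 := by
      show σ (τ v0) = v1
      rw [hτ, hσ, Equiv.swap_apply_of_ne_of_ne h01 h02, Equiv.swap_apply_left]
    have e2 : (τ * σ) v0 = v2 := by
      show τ (σ v0) = v2
      rw [hτ, hσ, Equiv.swap_apply_left, Equiv.swap_apply_left]
    rw [e1, e2] at heval
    exact h12 heval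
  refine ⟨part1, part2, ?_⟩
  obtain ⟨f, hfS, hf⟩ := part1
  obtain ⟨g, hgS, h, hhS, hgh, hgb, hhb⟩ := part2
  have hsub : ({f, g, h} : Set (Function.End (Fin n))) ⊆ S := by
    intro x hx
    rcases hx with rfl | rfl | rfl <;> assumption
  have h3 : ({f, g, h} : Set (Function.End (Fin n))).ncard = 3 := by
    rw [Set.ncard_eq_three]
    exact ⟨f, g, h, fun e => hf (e ▸ hgb), fun e => hf (e ▸ hhb), hgh, rfl⟩
  have : Finite (Function.End (Fin n)) := inferInstanceAs (Finite (Fin n → Fin n))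
  calc 3 = ({f, g, h} : Set (Function.End (Fin n))).ncard := h3.symm
    _ ≤ S.ncard := Set.ncard_le_ncard hsub (Set.toFinite S)
end

section
/- For each k ≥ 1 let c_k denote the number of ordered pairs (g, h) of permutations of Fin k such that the subgroup of the symmetric group on Fin k generated by {g, h} acts transitively on Fin k. Then for every n ≥ 1, ∑_{k=1}^{n} C(n-1, k-1) · c_k · ((n-k)!)² = (n!)². -/
open SimpleGraph

/-- `transPairsCard k` is the number of ordered pairs of permutations of `Fin k`
generating a transitive subgroup of the symmetric group. -/
noncomputable def transPairsCard (k : ℕ) : ℕ :=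
  Nat.card {p : Equiv.Perm (Fin k) × Equiv.Perm (Fin k) //
    ∀ x y : Fin k, ∃ g ∈ Subgroup.closure {p.1, p.2}, g x = y}

section AuxTP
open Equiv Equiv.Perm Finset
namespace TPAux2

def TransPair {γ : Type*} (p : Perm γ × Perm γ) : Prop :=
  ∀ x y : γ, ∃ g ∈ Subgroup.closure {p.1, p.2}, g x = y

/-- the orbit of `z` under the group generated by `p.1, p.2`, as a `Finset`. -/
noncomputable def OrbF {n : ℕ} (z : Fin n) (p : Perm (Fin n) × Perm (Fin n)) : Finset (Fin n) :=
  @Finset.filter _ (fun x => ∃ g ∈ Subgroup.closure {p.1, p.2}, g z = x)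
    (Classical.decPred _) Finset.univ



/-- `permCongr` as a `MulEquiv`. -/
def permCongrMul {γ δ : Type*} (e : γ ≃ δ) : Perm γ ≃* Perm δ :=
  { e.permCongr with
    map_mul' := fun f g => by
      ext x
      simp [Equiv.Perm.mul_apply] }

lemma permCongrMul_apply {γ δ : Type*} (e : γ ≃ δ) (f : Perm γ) (x : γ) :
    permCongrMul e f (e x) = e (f x) := by
  simp [permCongrMul]

lemma mem_closure_pair_congr {γ δ : Type*} (e : γ ≃ δ) (p : Perm γ × Perm γ) {g : Perm γ}
    (hg : g ∈ Subgroup.closure {p.1, p.2}) :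
    permCongrMul e g ∈ Subgroup.closure {permCongrMul e p.1, permCongrMul e p.2} := by
  have : ({permCongrMul e p.1, permCongrMul e p.2} : Set (Perm δ))
      = (permCongrMul e) '' {p.1, p.2} := by
    simp [Set.image_insert_eq]
  rw [this]
  have h2 : (⇑(permCongrMul e) '' {p.1, p.2}) = ⇑(permCongrMul e).toMonoidHom '' {p.1, p.2} := rfl
  rw [h2, ← MonoidHom.map_closure]
  exact ⟨g, hg, rfl⟩

lemma transPair_congr {γ δ : Type*} (e : γ ≃ δ) (p : Perm γ × Perm γ) (hp : TransPair p) :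
    TransPair (permCongrMul e p.1, permCongrMul e p.2) := by
  intro x y
  obtain ⟨g, hg, hgxy⟩ := hp (e.symm x) (e.symm y)
  refine ⟨permCongrMul e g, mem_closure_pair_congr e p hg, ?_⟩
  have := permCongrMul_apply e g (e.symm x)
  simp only [Equiv.apply_symm_apply] at this
  rw [this, hgxy, Equiv.apply_symm_apply]


@[simp] lemma permCongrMul_apply' {γ δ : Type*} (e : γ ≃ δ) (f : Perm γ) (x : δ) :
    permCongrMul e f x = e (f (e.symm x)) := rfl

lemma transPair_congr_iff {γ δ : Type*} (e : γ ≃ δ) (p : Perm γ × Perm γ) :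
    TransPair p ↔ TransPair (permCongrMul e p.1, permCongrMul e p.2) := by
  refine ⟨transPair_congr e p, fun h => ?_⟩
  have h2 := transPair_congr e.symm _ h
  have e1 : permCongrMul e.symm (permCongrMul e p.1) = p.1 := by ext x; simp
  have e2 : permCongrMul e.symm (permCongrMul e p.2) = p.2 := by ext x; simp
  rwa [e1, e2] at h2

/-- transitive pairs transport along an equivalence of the underlying types. -/
noncomputable def transPairEquiv {γ δ : Type*} (e : γ ≃ δ) :
    {p : Perm γ × Perm γ // TransPair p} ≃ {p : Perm δ × Perm δ // TransPair p} :=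
  Equiv.subtypeEquiv ((permCongrMul e).toEquiv.prodCongr (permCongrMul e).toEquiv)
    (fun p => transPair_congr_iff e p)

lemma mem_OrbF {n : ℕ} (z : Fin n) (p : Perm (Fin n) × Perm (Fin n)) (x : Fin n) :
    x ∈ OrbF z p ↔ ∃ g ∈ Subgroup.closure {p.1, p.2}, g z = x := by
  simp [OrbF, Finset.mem_filter]

variable {n : ℕ} (S : Finset (Fin n))

/-- glue a permutation of `S` and of its complement into a permutation of `Fin n`. -/
def Phi (a : Perm {x : Fin n // x ∈ S}) (b : Perm {x : Fin n // ¬ x ∈ S}) : Perm (Fin n) :=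
  (Equiv.sumCompl (· ∈ S)).permCongr (Equiv.sumCongr a b)

lemma Phi_apply_mem (a : Perm {x : Fin n // x ∈ S}) (b : Perm {x : Fin n // ¬ x ∈ S})
    {x : Fin n} (hx : x ∈ S) : Phi S a b x = ↑(a ⟨x, hx⟩) := by
  simp [Phi, Equiv.sumCompl_symm_apply_of_pos hx]

lemma Phi_apply_not_mem (a : Perm {x : Fin n // x ∈ S}) (b : Perm {x : Fin n // ¬ x ∈ S})
    {x : Fin n} (hx : ¬ x ∈ S) : Phi S a b x = ↑(b ⟨x, hx⟩) := by
  simp [Phi, Equiv.sumCompl_symm_apply_of_neg hx]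

lemma Phi_inj {a a' : Perm {x : Fin n // x ∈ S}} {b b' : Perm {x : Fin n // ¬ x ∈ S}}
    (h : Phi S a b = Phi S a' b') : a = a' ∧ b = b' := by
  constructor
  · ext ⟨x, hx⟩
    have := congrArg (fun f : Perm (Fin n) => f x) h
    simp only [Phi_apply_mem S _ _ hx] at this
    exact congrArg Fin.val this
  · ext ⟨x, hx⟩
    have := congrArg (fun f : Perm (Fin n) => f x) h
    simp only [Phi_apply_not_mem S _ _ hx] at this
    exact congrArg Fin.val this


/-- lift: words in `a₁, a₂` are simulated by words in the glued permutations. -/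
lemma lift_sim (a₁ a₂ : Perm {x : Fin n // x ∈ S}) (b₁ b₂ : Perm {x : Fin n // ¬ x ∈ S})
    {g : Perm {x : Fin n // x ∈ S}} (hg : g ∈ Subgroup.closure {a₁, a₂}) :
    ∃ G ∈ Subgroup.closure {Phi S a₁ b₁, Phi S a₂ b₂},
      ∀ x (hx : x ∈ S), G x = ↑(g ⟨x, hx⟩) := by
  induction hg using Subgroup.closure_induction with
  | mem u hu =>
    rcases hu with h | h
    · exact ⟨Phi S a₁ b₁, Subgroup.subset_closure (by simp),
        fun x hx => by rw [Phi_apply_mem S _ _ hx, h]⟩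
    · refine ⟨Phi S a₂ b₂, Subgroup.subset_closure (by simp), fun x hx => ?_⟩
      simp only [Set.mem_singleton_iff] at h
      rw [Phi_apply_mem S _ _ hx, h]
  | one => exact ⟨1, one_mem _, fun x hx => rfl⟩
  | mul u v hu hv ihu ihv =>
    obtain ⟨U, hU, hUs⟩ := ihu
    obtain ⟨V, hV, hVs⟩ := ihv
    refine ⟨U * V, mul_mem hU hV, fun x hx => ?_⟩
    have h1 : (U * V) x = U (V x) := rfl
    rw [h1, hVs x hx, hUs _ (v ⟨x, hx⟩).2]
    simp [Equiv.Perm.mul_apply]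
  | inv u hu ihu =>
    obtain ⟨U, hU, hUs⟩ := ihu
    refine ⟨U⁻¹, inv_mem hU, fun x hx => ?_⟩
    have : U ↑(u⁻¹ ⟨x, hx⟩) = x := by
      rw [hUs _ (u⁻¹ ⟨x, hx⟩).2]
      simp
    rw [Equiv.Perm.inv_eq_iff_eq, this]

/-- restrict: words in the glued permutations are simulated on `S` by words in `a₁, a₂`. -/
lemma restrict_sim (a₁ a₂ : Perm {x : Fin n // x ∈ S}) (b₁ b₂ : Perm {x : Fin n // ¬ x ∈ S})
    {G : Perm (Fin n)} (hG : G ∈ Subgroup.closure {Phi S a₁ b₁, Phi S a₂ b₂}) :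
    ∃ g ∈ Subgroup.closure {a₁, a₂}, ∀ x (hx : x ∈ S), G x = ↑(g ⟨x, hx⟩) := by
  induction hG using Subgroup.closure_induction with
  | mem u hu =>
    rcases hu with h | h
    · exact ⟨a₁, Subgroup.subset_closure (by simp),
        fun x hx => by rw [h, Phi_apply_mem S _ _ hx]⟩
    · refine ⟨a₂, Subgroup.subset_closure (by simp), fun x hx => ?_⟩
      simp only [Set.mem_singleton_iff] at h
      rw [h, Phi_apply_mem S _ _ hx]
  | one => exact ⟨1, one_mem _, fun x hx => rfl⟩
  | mul u v hu hv ihu ihv =>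
    obtain ⟨U, hU, hUs⟩ := ihu
    obtain ⟨V, hV, hVs⟩ := ihv
    refine ⟨U * V, mul_mem hU hV, fun x hx => ?_⟩
    have h1 : (u * v) x = u (v x) := rfl
    rw [h1, hVs x hx, hUs _ (V ⟨x, hx⟩).2]
    simp [Equiv.Perm.mul_apply]
  | inv u hu ihu =>
    obtain ⟨U, hU, hUs⟩ := ihu
    refine ⟨U⁻¹, inv_mem hU, fun x hx => ?_⟩
    have : u ↑(U⁻¹ ⟨x, hx⟩) = x := by
      rw [hUs _ (U⁻¹ ⟨x, hx⟩).2]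
      simp
    rw [Equiv.Perm.inv_eq_iff_eq, this]


variable (z : Fin n)

lemma key_iff (hz : z ∈ S) (a₁ a₂ : Perm {x : Fin n // x ∈ S})
    (b₁ b₂ : Perm {x : Fin n // ¬ x ∈ S}) :
    OrbF z (Phi S a₁ b₁, Phi S a₂ b₂) = S ↔ TransPair (a₁, a₂) := by
  constructor
  · intro h x y
    have hx : (x : Fin n) ∈ OrbF z (Phi S a₁ b₁, Phi S a₂ b₂) := by rw [h]; exact x.2
    have hy : (y : Fin n) ∈ OrbF z (Phi S a₁ b₁, Phi S a₂ b₂) := by rw [h]; exact y.2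
    rw [mem_OrbF] at hx hy
    obtain ⟨gx, hgx, hgxz⟩ := hx
    obtain ⟨gy, hgy, hgyz⟩ := hy
    have hmem : gy * gx⁻¹ ∈ Subgroup.closure {Phi S a₁ b₁, Phi S a₂ b₂} :=
      mul_mem hgy (inv_mem hgx)
    obtain ⟨g, hg, hgs⟩ := restrict_sim S a₁ a₂ b₁ b₂ hmem
    refine ⟨g, hg, ?_⟩
    have hval : ((gy * gx⁻¹) (x : Fin n)) = ↑(g ⟨(x : Fin n), x.2⟩) := hgs _ x.2
    have hval2 : (gy * gx⁻¹) (x : Fin n) = (y : Fin n) := by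
      have : gx⁻¹ (x : Fin n) = z := by rw [Equiv.Perm.inv_eq_iff_eq, hgxz]
      simp [Equiv.Perm.mul_apply, this, hgyz]
    apply Subtype.ext
    rw [← hval2, hval]
  · intro htrans
    ext x
    rw [mem_OrbF]
    constructor
    · rintro ⟨g, hg, rfl⟩
      obtain ⟨g', _, hgs⟩ := restrict_sim S a₁ a₂ b₁ b₂ hg
      rw [hgs z hz]
      exact (g' ⟨z, hz⟩).2
    · intro hx
      obtain ⟨g, hg, hgz⟩ := htrans ⟨z, hz⟩ ⟨x, hx⟩
      obtain ⟨G, hG, hGs⟩ := lift_sim S a₁ a₂ b₁ b₂ hg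
      exact ⟨G, hG, by rw [hGs z hz, hgz]⟩

lemma invariant_of_orb {p : Perm (Fin n) × Perm (Fin n)} (h : OrbF z p = S)
    {g : Perm (Fin n)} (hg : g ∈ Subgroup.closure {p.1, p.2}) (x : Fin n) :
    x ∈ S ↔ g x ∈ S := by
  constructor
  · intro hx
    rw [← h, mem_OrbF] at hx ⊢
    obtain ⟨u, hu, huz⟩ := hx
    exact ⟨g * u, mul_mem hg hu, by simp [Equiv.Perm.mul_apply, huz]⟩
  · intro hx
    rw [← h, mem_OrbF] at hx ⊢
    obtain ⟨u, hu, huz⟩ := hx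
    exact ⟨g⁻¹ * u, mul_mem (inv_mem hg) hu,
      by simp only [Equiv.Perm.mul_apply, huz]; simp⟩

lemma exists_decomp {p : Perm (Fin n) × Perm (Fin n)} (h : OrbF z p = S) :
    ∃ (a₁ a₂ : Perm {x : Fin n // x ∈ S}) (b₁ b₂ : Perm {x : Fin n // ¬ x ∈ S}),
      p = (Phi S a₁ b₁, Phi S a₂ b₂) := by
  have h1 : p.1 ∈ Subgroup.closure {p.1, p.2} := Subgroup.subset_closure (by simp)
  have h2 : p.2 ∈ Subgroup.closure {p.1, p.2} := Subgroup.subset_closure (by simp)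
  have i1 := fun x => (invariant_of_orb S z h h1 x).symm
  have i2 := fun x => (invariant_of_orb S z h h2 x).symm
  refine ⟨p.1.subtypePerm i1, p.2.subtypePerm i2,
    p.1.subtypePerm (fun x => not_congr (i1 x)), p.2.subtypePerm (fun x => not_congr (i2 x)), ?_⟩
  have e1 : p.1 = Phi S (p.1.subtypePerm i1) (p.1.subtypePerm (fun x => not_congr (i1 x))) := by
    ext x
    by_cases hx : x ∈ S
    · rw [Phi_apply_mem S _ _ hx]; rfl
    · rw [Phi_apply_not_mem S _ _ hx]; rfl
  have e2 : p.2 = Phi S (p.2.subtypePerm i2) (p.2.subtypePerm (fun x => not_congr (i2 x))) := by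
    ext x
    by_cases hx : x ∈ S
    · rw [Phi_apply_mem S _ _ hx]; rfl
    · rw [Phi_apply_not_mem S _ _ hx]; rfl
  exact Prod.ext e1 e2


/-- the fiber over `S` is equivalent to (transitive pairs on S) × (pairs on Sᶜ). -/
noncomputable def fiberEquiv (hz : z ∈ S) :
    ({q : Perm {x : Fin n // x ∈ S} × Perm {x : Fin n // x ∈ S} // TransPair q} ×
      (Perm {x : Fin n // ¬ x ∈ S} × Perm {x : Fin n // ¬ x ∈ S})) ≃
    {p : Perm (Fin n) × Perm (Fin n) // OrbF z p = S} :=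
  Equiv.ofBijective
    (fun w => ⟨(Phi S w.1.1.1 w.2.1, Phi S w.1.1.2 w.2.2),
      (key_iff S z hz _ _ _ _).mpr (by exact w.1.2)⟩)
    (by
      constructor
      · rintro ⟨⟨⟨a₁, a₂⟩, ht⟩, ⟨b₁, b₂⟩⟩ ⟨⟨⟨a₁', a₂'⟩, ht'⟩, ⟨b₁', b₂'⟩⟩ h
        simp only [Subtype.mk.injEq, Prod.mk.injEq] at h
        obtain ⟨h1a, h1b⟩ := Phi_inj S h.1
        obtain ⟨h2a, h2b⟩ := Phi_inj S h.2
        subst h1a h1b h2a h2b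
        rfl
      · rintro ⟨p, hp⟩
        obtain ⟨a₁, a₂, b₁, b₂, rfl⟩ := exists_decomp S z hp
        have ht : TransPair (a₁, a₂) := (key_iff S z hz _ _ _ _).mp hp
        exact ⟨⟨⟨(a₁, a₂), ht⟩, (b₁, b₂)⟩, rfl⟩)

lemma card_perm_compl : Nat.card (Perm {x : Fin n // ¬ x ∈ S}) = (n - S.card).factorial := by
  have hc : Fintype.card {x : Fin n // ¬ x ∈ S} = n - S.card := by
    have := Fintype.card_subtype_compl (fun x : Fin n => x ∈ S)
    simp only [Fintype.card_fin] at this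
    rw [this]
    congr 1
    simpa using (Fintype.card_coe S)
  rw [Nat.card_eq_fintype_card, Fintype.card_perm, hc]

lemma card_transPair_mem :
    Nat.card {q : Perm {x : Fin n // x ∈ S} × Perm {x : Fin n // x ∈ S} // TransPair q}
      = Nat.card {p : Perm (Fin S.card) × Perm (Fin S.card) // TransPair p} := by
  have e : {x : Fin n // x ∈ S} ≃ Fin S.card := by
    refine Fintype.equivFinOfCardEq ?_
    simpa using (Fintype.card_coe S)
  exact Nat.card_congr (transPairEquiv e)

lemma fiber_card (hz : z ∈ S) :
    Nat.card {p : Perm (Fin n) × Perm (Fin n) // OrbF z p = S}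
      = Nat.card {p : Perm (Fin S.card) × Perm (Fin S.card) // TransPair p}
          * ((n - S.card).factorial) ^ 2 := by
  rw [← Nat.card_congr (fiberEquiv S z hz), Nat.card_prod, card_transPair_mem, Nat.card_prod,
    card_perm_compl, sq]


lemma count_subsets {n k : ℕ} (hk : 1 ≤ k) (z : Fin n) :
    ((Finset.univ.powersetCard k).filter (fun S : Finset (Fin n) => z ∈ S)).card
      = Nat.choose (n - 1) (k - 1) := by
  have htarget : (((Finset.univ : Finset (Fin n)).erase z).powersetCard (k - 1)).card
      = Nat.choose (n - 1) (k - 1) := by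
    rw [Finset.card_powersetCard, Finset.card_erase_of_mem (Finset.mem_univ z),
      Finset.card_univ, Fintype.card_fin]
  rw [← htarget]
  refine Finset.card_nbij' (fun S => S.erase z) (fun T => insert z T) ?_ ?_ ?_ ?_
  · intro S hS
    simp only [Finset.mem_coe, Finset.mem_filter, Finset.mem_powersetCard] at hS
    obtain ⟨⟨_, hcard⟩, hzS⟩ := hS
    rw [Finset.mem_coe, Finset.mem_powersetCard]
    exact ⟨fun x hx => by
        simp only [Finset.mem_erase] at hx ⊢
        exact ⟨hx.1, Finset.mem_univ _⟩,
      by rw [Finset.card_erase_of_mem hzS, hcard]⟩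
  · intro T hT
    rw [Finset.mem_coe, Finset.mem_powersetCard] at hT
    obtain ⟨hsub, hcard⟩ := hT
    have hzT : z ∉ T := fun h => (Finset.mem_erase.mp (hsub h)).1 rfl
    simp only [Finset.mem_coe, Finset.mem_filter, Finset.mem_powersetCard]
    refine ⟨⟨Finset.subset_univ _, ?_⟩, Finset.mem_insert_self _ _⟩
    rw [Finset.card_insert_of_notMem hzT, hcard]
    omega
  · intro S hS
    simp only [Finset.mem_coe, Finset.mem_filter] at hS
    exact Finset.insert_erase hS.2
  · intro T hT
    rw [Finset.mem_coe, Finset.mem_powersetCard] at hT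
    have hzT : z ∉ T := fun h => (Finset.mem_erase.mp (hT.1 h)).1 rfl
    exact Finset.erase_insert hzT


lemma transPairsCard_eq (k : ℕ) :
    transPairsCard k = Nat.card {p : Perm (Fin k) × Perm (Fin k) // TransPair p} := rfl

end TPAux2
end AuxTP

theorem transitive_pairs_recurrence (n : ℕ) (hn : 1 ≤ n) :
    ∑ k ∈ Finset.Icc 1 n,
        Nat.choose (n - 1) (k - 1) * transPairsCard k * ((n - k).factorial) ^ 2
      = (n.factorial) ^ 2 := by
  classical
  set z : Fin n := ⟨0, hn⟩ with hzdef
  -- the count of each fiber of the orbit map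
  have hfiber : ∀ S ∈ (Finset.univ : Finset (Fin n)).powerset,
      (Finset.univ.filter
          (fun p : Equiv.Perm (Fin n) × Equiv.Perm (Fin n) => TPAux2.OrbF z p = S)).card
        = if z ∈ S then transPairsCard S.card * ((n - S.card).factorial) ^ 2 else 0 := by
    intro S _
    by_cases hzS : z ∈ S
    · rw [if_pos hzS]
      have h1 : (Finset.univ.filter
            (fun p : Equiv.Perm (Fin n) × Equiv.Perm (Fin n) => TPAux2.OrbF z p = S)).card
          = Nat.card {p : Equiv.Perm (Fin n) × Equiv.Perm (Fin n) // TPAux2.OrbF z p = S} := by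
        rw [Nat.card_eq_fintype_card, Fintype.card_subtype]
      rw [h1, TPAux2.fiber_card S z hzS, TPAux2.transPairsCard_eq]
    · rw [if_neg hzS, Finset.card_eq_zero, Finset.filter_eq_empty_iff]
      intro p _ hOrb
      apply hzS
      rw [← hOrb, TPAux2.mem_OrbF]
      exact ⟨1, one_mem _, rfl⟩
  have base : (Finset.univ : Finset (Equiv.Perm (Fin n) × Equiv.Perm (Fin n))).card
      = n.factorial ^ 2 := by
    rw [Finset.card_univ, Fintype.card_prod, Fintype.card_perm, Fintype.card_fin, sq]
  have fib := Finset.card_eq_sum_card_fiberwise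
    (f := TPAux2.OrbF z) (s := Finset.univ) (t := Finset.univ.powerset)
    (fun p _ => Finset.mem_powerset.mpr (Finset.subset_univ _))
  rw [base, Finset.sum_congr rfl hfiber] at fib
  rw [Finset.sum_powerset, Finset.card_univ,
    Fintype.card_fin] at fib
  -- the inner sums
  have inner : ∀ k : ℕ,
      (∑ S ∈ Finset.univ.powersetCard k,
        if z ∈ S then transPairsCard S.card * ((n - S.card).factorial) ^ 2 else 0)
      = ((Finset.univ.powersetCard k).filter (fun S : Finset (Fin n) => z ∈ S)).card
          * (transPairsCard k * ((n - k).factorial) ^ 2) := by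
    intro k
    rw [← Finset.sum_filter]
    rw [Finset.sum_congr rfl (fun S hS => ?_), Finset.sum_const, smul_eq_mul]
    have hSk : S.card = k :=
      (Finset.mem_powersetCard.mp (Finset.mem_filter.mp hS).1).2
    rw [hSk]
  rw [Finset.sum_congr rfl (fun k _ => inner k)] at fib
  -- drop the `k = 0` term and rewrite the subset counts
  have hzero : (((Finset.univ : Finset (Fin n)).powersetCard 0).filter
      (fun S : Finset (Fin n) => z ∈ S)).card
        * (transPairsCard 0 * ((n - 0).factorial) ^ 2) = 0 := by
    rw [Finset.powersetCard_zero]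
    simp [Finset.filter_singleton]
  have hsub : Finset.Icc 1 n ⊆ Finset.range (n + 1) := by
    intro x hx
    rw [Finset.mem_range]
    exact Nat.lt_succ_of_le (Finset.mem_Icc.mp hx).2
  have hswap : ∑ k ∈ Finset.Icc 1 n,
      ((Finset.univ.powersetCard k).filter (fun S : Finset (Fin n) => z ∈ S)).card
        * (transPairsCard k * ((n - k).factorial) ^ 2)
      = ∑ k ∈ Finset.range (n + 1),
      ((Finset.univ.powersetCard k).filter (fun S : Finset (Fin n) => z ∈ S)).card
        * (transPairsCard k * ((n - k).factorial) ^ 2) := by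
    refine Finset.sum_subset hsub ?_
    intro x hxr hx
    have : x = 0 := by
      rw [Finset.mem_range] at hxr
      rw [Finset.mem_Icc] at hx
      omega
    rw [this]
    exact hzero
  rw [← hswap] at fib
  rw [fib]
  refine Finset.sum_congr rfl ?_
  intro k hk
  rw [Finset.mem_Icc] at hk
  rw [TPAux2.count_subsets hk.1 z, mul_assoc]
end

section
/- Let n ≥ 2. The number of ordered pairs (g, h) of permutations of Fin n such that the subgroup of the symmetric group generated by {g, h} is NOT transitive on Fin n is at most ∑_{k=1}^{⌊n/2⌋} C(n, k) · (k!)² · ((n-k)!)². -/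
open SimpleGraph

open Finset Equiv

open Finset Equiv

private lemma pres_iff' {n : ℕ} (g : Equiv.Perm (Fin n)) (S : Finset (Fin n))
    (h : ∀ x ∈ S, g x ∈ S) : ∀ x, x ∈ S ↔ g x ∈ S := by
  have himg : S.image g = S := by
    apply Finset.eq_of_subset_of_card_le
    · exact Finset.image_subset_iff.2 h
    · rw [Finset.card_image_of_injective _ g.injective]
  intro x
  refine ⟨h x, fun hg => ?_⟩
  rw [← himg] at hg
  obtain ⟨z, hz, hzg⟩ := Finset.mem_image.1 hg
  rwa [← g.injective hzg]

private lemma gcount_le' {n : ℕ} (S : Finset (Fin n)) :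
    (Finset.univ.filter (fun g : Equiv.Perm (Fin n) => ∀ x ∈ S, g x ∈ S)).card
      ≤ S.card.factorial * (n - S.card).factorial := by
  classical
  rw [← Fintype.card_subtype]
  have hle := Fintype.card_le_of_injective
    (f := fun g : {g : Equiv.Perm (Fin n) // ∀ x ∈ S, g x ∈ S} =>
      ((g.1.subtypePerm (fun x => (pres_iff' g.1 S g.2 x).symm) : Equiv.Perm {x // x ∈ S}),
       (g.1.subtypePerm (fun x => by
          simpa using (not_congr (pres_iff' g.1 S g.2 x)).symm) : Equiv.Perm {x // x ∈ Sᶜ})))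
    (by
      rintro ⟨g, hg⟩ ⟨g', hg'⟩ hfg
      simp only [Prod.mk.injEq] at hfg
      ext x
      by_cases hx : x ∈ S
      · have := congrArg (fun e => (e ⟨x, hx⟩ : {x // x ∈ S}).1) hfg.1
        simp at this; exact congrArg Fin.val this
      · have hx' : x ∈ Sᶜ := by simpa using hx
        have := congrArg (fun e => (e ⟨x, hx'⟩ : {x // x ∈ Sᶜ}).1) hfg.2
        simp at this; exact congrArg Fin.val this)
  calc _ ≤ _ := hle
    _ = S.card.factorial * (n - S.card).factorial := by
        rw [Fintype.card_prod, Fintype.card_perm, Fintype.card_perm,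
          Fintype.card_coe, Fintype.card_coe, Finset.card_compl, Fintype.card_fin]

private lemma exists_invariant' {n : ℕ} (p : Equiv.Perm (Fin n) × Equiv.Perm (Fin n))
    (hp : ¬ ∀ x y : Fin n, ∃ g ∈ Subgroup.closure {p.1, p.2}, g x = y) :
    ∃ S : Finset (Fin n), (1 ≤ S.card ∧ S.card ≤ n / 2) ∧
      (∀ x ∈ S, p.1 x ∈ S) ∧ (∀ x ∈ S, p.2 x ∈ S) := by
  classical
  push_neg at hp
  obtain ⟨x, y, hxy⟩ := hp
  set H := Subgroup.closure ({p.1, p.2} : Set (Equiv.Perm (Fin n))) with hH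
  set S₀ : Finset (Fin n) := Finset.univ.filter (fun z => ∃ g ∈ H, g x = z) with hS₀
  have hxS₀ : x ∈ S₀ := by
    simp only [hS₀, Finset.mem_filter, Finset.mem_univ, true_and]
    exact ⟨1, one_mem H, rfl⟩
  have hyS₀ : y ∉ S₀ := by
    simp only [hS₀, Finset.mem_filter, Finset.mem_univ, true_and]
    rintro ⟨g, hg, hgx⟩
    exact hxy g hg hgx
  have hinv : ∀ g ∈ H, ∀ z ∈ S₀, g z ∈ S₀ := by
    intro g hg z hz
    simp only [hS₀, Finset.mem_filter, Finset.mem_univ, true_and] at hz ⊢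
    obtain ⟨g', hg', hg'x⟩ := hz
    exact ⟨g * g', mul_mem hg hg', by simp [hg'x]⟩
  have h1 : p.1 ∈ H := Subgroup.subset_closure (by simp)
  have h2 : p.2 ∈ H := Subgroup.subset_closure (by simp)
  have hcard1 : 1 ≤ S₀.card := Finset.card_pos.2 ⟨x, hxS₀⟩
  have hcard2 : S₀.card ≤ n - 1 := by
    have : S₀ ⊆ Finset.univ.erase y := by
      intro z hz
      exact Finset.mem_erase.2 ⟨fun h => hyS₀ (h ▸ hz), Finset.mem_univ z⟩
    calc S₀.card ≤ (Finset.univ.erase y).card := Finset.card_le_card this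
      _ = n - 1 := by rw [Finset.card_erase_of_mem (Finset.mem_univ y), Finset.card_univ,
          Fintype.card_fin]
  by_cases hc : S₀.card ≤ n / 2
  · exact ⟨S₀, ⟨hcard1, hc⟩, hinv p.1 h1, hinv p.2 h2⟩
  · refine ⟨S₀ᶜ, ⟨?_, ?_⟩, ?_, ?_⟩
    · rw [Finset.card_compl, Fintype.card_fin]; omega
    · rw [Finset.card_compl, Fintype.card_fin]; omega
    · intro z hz
      rw [Finset.mem_compl] at hz ⊢
      exact fun h => hz ((pres_iff' p.1 S₀ (hinv p.1 h1) z).2 h)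
    · intro z hz
      rw [Finset.mem_compl] at hz ⊢
      exact fun h => hz ((pres_iff' p.2 S₀ (hinv p.2 h2) z).2 h)

theorem card_non_transitive_pairs_le (n : ℕ) (hn : 2 ≤ n) :
    Nat.card {p : Equiv.Perm (Fin n) × Equiv.Perm (Fin n) //
        ¬ ∀ x y : Fin n, ∃ g ∈ Subgroup.closure {p.1, p.2}, g x = y}
      ≤ ∑ k ∈ Finset.Icc 1 (n / 2),
          Nat.choose n k * (k.factorial) ^ 2 * ((n - k).factorial) ^ 2 := by
  classical
  set P : Equiv.Perm (Fin n) × Equiv.Perm (Fin n) → Prop :=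
    fun p => ¬ ∀ x y : Fin n, ∃ g ∈ Subgroup.closure {p.1, p.2}, g x = y with hP
  set B : Finset (Equiv.Perm (Fin n) × Equiv.Perm (Fin n)) := Finset.univ.filter P with hB
  have hcard0 : Nat.card {p // P p} = B.card := by
    rw [Nat.card_eq_fintype_card, Fintype.card_subtype]
  rw [hcard0]
  set 𝒮 : Finset (Finset (Fin n)) :=
    Finset.univ.filter (fun S : Finset (Fin n) => 1 ≤ S.card ∧ S.card ≤ n / 2) with h𝒮
  set φ : Equiv.Perm (Fin n) × Equiv.Perm (Fin n) → Finset (Fin n) :=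
    fun p => if h : P p then (exists_invariant' p h).choose else ∅ with hφ
  have hφspec : ∀ p, P p → (1 ≤ (φ p).card ∧ (φ p).card ≤ n / 2) ∧
      (∀ x ∈ φ p, p.1 x ∈ φ p) ∧ (∀ x ∈ φ p, p.2 x ∈ φ p) := by
    intro p hp
    simp only [hφ, dif_pos hp]
    exact (exists_invariant' p hp).choose_spec
  have hmaps : ∀ p ∈ B, φ p ∈ 𝒮 := by
    intro p hp
    rw [hB, Finset.mem_filter] at hp
    rw [h𝒮, Finset.mem_filter]
    exact ⟨Finset.mem_univ _, (hφspec p hp.2).1⟩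
  rw [Finset.card_eq_sum_card_fiberwise hmaps]
  -- bound each fiber
  have hfiber : ∀ S ∈ 𝒮, (B.filter (fun p => φ p = S)).card
      ≤ S.card.factorial ^ 2 * (n - S.card).factorial ^ 2 := by
    intro S _
    have hsub : B.filter (fun p => φ p = S) ⊆
        Finset.univ.filter (fun p : Equiv.Perm (Fin n) × Equiv.Perm (Fin n) =>
          (∀ x ∈ S, p.1 x ∈ S) ∧ (∀ x ∈ S, p.2 x ∈ S)) := by
      intro p hp
      rw [Finset.mem_filter, hB, Finset.mem_filter] at hp
      obtain ⟨⟨_, hPp⟩, hφp⟩ := hp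
      rw [Finset.mem_filter]
      refine ⟨Finset.mem_univ _, ?_, ?_⟩ <;> rw [← hφp]
      · exact (hφspec p hPp).2.1
      · exact (hφspec p hPp).2.2
    have heq : Finset.univ.filter (fun p : Equiv.Perm (Fin n) × Equiv.Perm (Fin n) =>
          (∀ x ∈ S, p.1 x ∈ S) ∧ (∀ x ∈ S, p.2 x ∈ S))
        = (Finset.univ.filter (fun g : Equiv.Perm (Fin n) => ∀ x ∈ S, g x ∈ S)) ×ˢ
          (Finset.univ.filter (fun g : Equiv.Perm (Fin n) => ∀ x ∈ S, g x ∈ S)) := by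
      ext p
      simp [Finset.mem_filter, Finset.mem_product, and_assoc]
    calc (B.filter (fun p => φ p = S)).card ≤ _ := Finset.card_le_card hsub
      _ = (Finset.univ.filter (fun g : Equiv.Perm (Fin n) => ∀ x ∈ S, g x ∈ S)).card *
          (Finset.univ.filter (fun g : Equiv.Perm (Fin n) => ∀ x ∈ S, g x ∈ S)).card := by
          rw [heq, Finset.card_product]
      _ ≤ (S.card.factorial * (n - S.card).factorial) *
          (S.card.factorial * (n - S.card).factorial) :=
          Nat.mul_le_mul (gcount_le' S) (gcount_le' S)
      _ = S.card.factorial ^ 2 * (n - S.card).factorial ^ 2 := by ring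
  calc ∑ S ∈ 𝒮, (B.filter (fun p => φ p = S)).card
      ≤ ∑ S ∈ 𝒮, S.card.factorial ^ 2 * (n - S.card).factorial ^ 2 :=
        Finset.sum_le_sum hfiber
    _ = ∑ k ∈ Finset.Icc 1 (n / 2),
          Nat.choose n k * (k.factorial) ^ 2 * ((n - k).factorial) ^ 2 := by
        have hmaps2 : ∀ S ∈ 𝒮, S.card ∈ Finset.Icc 1 (n / 2) := by
          intro S hS
          rw [h𝒮, Finset.mem_filter] at hS
          rw [Finset.mem_Icc]
          exact hS.2
        rw [← Finset.sum_fiberwise_of_maps_to hmaps2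
          (fun S => S.card.factorial ^ 2 * (n - S.card).factorial ^ 2)]
        refine Finset.sum_congr rfl (fun k hk => ?_)
        rw [Finset.mem_Icc] at hk
        have hfilt : 𝒮.filter (fun S => S.card = k)
            = Finset.univ.filter (fun S : Finset (Fin n) => S.card = k) := by
          ext S
          simp only [h𝒮, Finset.mem_filter, Finset.mem_univ, true_and]
          constructor
          · rintro ⟨_, h⟩; exact h
          · intro h; exact ⟨h ▸ hk, h⟩
        rw [Finset.sum_congr rfl (fun S hS => by
            rw [(Finset.mem_filter.1 hS).2]),
          Finset.sum_const, hfilt]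
        have : (Finset.univ.filter (fun S : Finset (Fin n) => S.card = k))
            = Finset.powersetCard k Finset.univ := by
          rw [Finset.powersetCard_eq_filter, Finset.powerset_univ]
        rw [this, Finset.card_powersetCard, Finset.card_univ, Fintype.card_fin,
          smul_eq_mul, mul_assoc]
end
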